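/- arXiv:2208.00413 — 2 statements merged into one kernel-verified Lean document; each statement's English description precedes it below -/
import Mathlib

section
/- Let s > s₀ > d/2, r ≥ 1, and let σ₀, σ₁, …, σ_r ∈ {−1,+1}. Let X_{j,j₁,…,j_r} ∈ ℂ, indexed by (j,j₁,…,j_r) ∈ (ℤ^d)^{r+1}, be completely symmetric with respect to any permutation of the indexes j, j₁, …, j_r and satisfy M := sup_{j,j₁,…,j_r} |X_{j,j₁,…,j_r}| < ∞. For u^{(1)},…,u^{(r)} ∈ ℓ²_s(ℤ^d) define X_j(u^{(1)},…,u^{(r)}) := Σ X_{j,j₁,…,j_r} u^{(1)}_{j₁} ⋯ u^{(r)}_{j_r}, where the sum runs over all j₁,…,j_r ∈ ℤ^d with σ₀ j + Σ_{l=1}^r σ_l j_l = 0. Then there exists a constant C_{s,r} > 0 such that ‖X(u^{(1)},…,u^{(r)})‖_s ≤ C_{s,r} · M · Σ_{l=1}^r ‖u^{(1)}‖_{s₀} ⋯ ‖u^{(l−1)}‖_{s₀} ‖u^{(l)}‖_s ‖u^{(l+1)}‖_{s₀} ⋯ ‖u^{(r)}‖_{s₀}. -/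
open scoped BigOperators

namespace AG

abbrev Zd (d : ℕ) := Fin d → ℤ

noncomputable def enorm {d : ℕ} (j : Zd d) : ℝ := Real.sqrt (∑ i, ((j i : ℝ))^2)

/-- The norm of `ℓ²_s(ℤ^d)`. -/
noncomputable def zNorm (d : ℕ) (s : ℝ) (v : Zd d → ℂ) : ℝ :=
  Real.sqrt (∑' j : Zd d, (1 + enorm j) ^ (2 * s) * ‖v j‖ ^ 2)

/-- Membership in `ℓ²_s(ℤ^d)`. -/
def MemZ (d : ℕ) (s : ℝ) (v : Zd d → ℂ) : Prop :=
  Summable (fun j : Zd d => (1 + enorm j) ^ (2 * s) * ‖v j‖ ^ 2)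

/-- The `r`-linear map with coefficients `c` and momentum signs `σ`:
`X_j(u⁽¹⁾,…,u⁽ʳ⁾) = Σ_{σ₀ j + Σ σ_l j_l = 0} c_{j,j₁,…,j_r} u⁽¹⁾_{j₁} ⋯ u⁽ʳ⁾_{j_r}`. -/
noncomputable def Xfield (d r : ℕ) (σ : Fin (r + 1) → ℤ)
    (c : (Fin (r + 1) → Zd d) → ℂ) (u : Fin r → (Zd d → ℂ)) : Zd d → ℂ :=
  fun j => ∑' k : Fin r → Zd d,
    if σ 0 • j + ∑ l, σ l.succ • k l = (0 : Zd d)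
      then c (Fin.cons j k) * ∏ l, u l (k l) else 0

/-! ### Auxiliary material for the proof of `stmt_1` -/

open scoped ENNReal NNReal
open MeasureTheory Finset

lemma ofReal_norm_eq_coe_nnnorm {E : Type*} [SeminormedAddGroup E] (x : E) :
    ENNReal.ofReal ‖x‖ = (‖x‖₊ : ℝ≥0∞) := ofReal_norm x

/-- Half-power squared identity in `ℝ≥0∞`. -/
lemma half_rpow_sq (x : ℝ≥0∞) : (x ^ (1/2 : ℝ)) ^ (2 : ℝ) = x := by
  rw [← ENNReal.rpow_mul]; norm_num

lemma pow_two_eq_rpow (x : ℝ≥0∞) : x ^ (2 : ℕ) = x ^ (2 : ℝ) := by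
  rw [← ENNReal.rpow_natCast]; norm_num

/-- Cauchy–Schwarz for `tsum` in `ℝ≥0∞`. -/
lemma tsum_CS {ι : Type*} [Countable ι] (f g : ι → ℝ≥0∞) :
    (∑' i, (f i) ^ (1/2 : ℝ) * (g i) ^ (1/2 : ℝ)) ^ 2 ≤ (∑' i, f i) * (∑' i, g i) := by
  letI : MeasurableSpace ι := ⊤
  haveI : MeasurableSingletonClass ι := ⟨fun a => trivial⟩
  have hm : ∀ h : ι → ℝ≥0∞, AEMeasurable h (Measure.count : Measure ι) :=
    fun h => measurable_from_top.aemeasurable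
  have hpq : (2:ℝ).HolderConjugate 2 := Real.HolderConjugate.two_two
  have h := ENNReal.lintegral_mul_le_Lp_mul_Lq (Measure.count : Measure ι) hpq
    (hm (fun i => (f i)^(1/2:ℝ))) (hm (fun i => (g i)^(1/2:ℝ)))
  simp only [lintegral_count, Pi.mul_apply, half_rpow_sq] at h
  calc (∑' i, (f i) ^ (1/2 : ℝ) * (g i) ^ (1/2 : ℝ)) ^ 2
      ≤ ((∑' i, f i) ^ (1/2:ℝ) * (∑' i, g i) ^ (1/2:ℝ)) ^ 2 := pow_le_pow_left' h 2
    _ = (∑' i, f i) * (∑' i, g i) := by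
        rw [mul_pow, pow_two_eq_rpow, pow_two_eq_rpow, half_rpow_sq, half_rpow_sq]

/-- Factorization of a `tsum` of a product over a pi type indexed by `Fin n`. -/
lemma tsum_pi_fin {α : Type*} : ∀ (n : ℕ) (h : Fin n → α → ℝ≥0∞),
    ∑' k : Fin n → α, ∏ m, h m (k m) = ∏ m, ∑' x, h m x := by
  intro n
  induction n with
  | zero =>
      intro h
      haveI : Unique (Fin 0 → α) := ⟨⟨fun i => i.elim0⟩, fun f => funext fun i => i.elim0⟩
      simp [tsum_eq_single (default : Fin 0 → α) (fun b hb => absurd (Unique.eq_default b) hb)]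
  | succ n ih =>
      intro h
      rw [← Equiv.tsum_eq (Fin.consEquiv (fun _ : Fin (n+1) => α)) (fun k => ∏ m, h m (k m))]
      have h1 : ∀ p : α × (Fin n → α),
          (∏ m, h m ((Fin.consEquiv (fun _ : Fin (n+1) => α) p) m))
          = h 0 p.1 * ∏ i : Fin n, h i.succ (p.2 i) := by
        intro p
        rw [Fin.prod_univ_succ]
        simp only [Fin.consEquiv_apply, Fin.cons_zero, Fin.cons_succ]
      simp only [h1]
      rw [ENNReal.tsum_prod (f := fun (a : α) (b : Fin n → α) =>
        h 0 a * ∏ i : Fin n, h i.succ (b i))]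
      simp only [ENNReal.tsum_mul_left]
      rw [ih (fun i => h i.succ), Fin.prod_univ_succ, ← ENNReal.tsum_mul_right]

/-- Factorization of a `tsum` of a product over a pi type with finite index. -/
lemma tsum_pi_fintype {ι α : Type*} [Fintype ι] (h : ι → α → ℝ≥0∞) :
    ∑' k : ι → α, ∏ m, h m (k m) = ∏ m, ∑' x, h m x := by
  classical
  obtain ⟨n, ⟨e⟩⟩ : ∃ n, Nonempty (ι ≃ Fin n) := ⟨_, ⟨Fintype.equivFin ι⟩⟩
  rw [← Equiv.tsum_eq (Equiv.arrowCongr e.symm (Equiv.refl α)) (fun k => ∏ m, h m (k m))]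
  have h1 : ∀ g : Fin n → α,
      (∏ m : ι, h m ((Equiv.arrowCongr e.symm (Equiv.refl α) g) m))
        = ∏ i : Fin n, h (e.symm i) (g i) := by
    intro g
    refine Fintype.prod_equiv e _ _ fun m => ?_
    simp [Equiv.arrowCongr]
  simp only [h1]
  rw [tsum_pi_fin n (fun i => h (e.symm i))]
  exact Fintype.prod_equiv e.symm _ _ fun i => rfl

/-- `Σ x² ≤ (Σ x)²` in `ℝ≥0∞`. -/
lemma sum_sq_le_sq_sum {ι : Type*} (t : Finset ι) (x : ι → ℝ≥0∞) :
    ∑ l ∈ t, (x l) ^ 2 ≤ (∑ l ∈ t, x l) ^ 2 := by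
  rw [sq]
  calc ∑ l ∈ t, x l ^ 2 = ∑ l ∈ t, x l * x l := by simp [sq]
    _ ≤ ∑ l ∈ t, x l * (∑ m ∈ t, x m) := by
        refine Finset.sum_le_sum fun l hl =>
          mul_le_mul' le_rfl (Finset.single_le_sum (fun _ _ => zero_le) hl)
    _ = (∑ l ∈ t, x l) * (∑ m ∈ t, x m) := by rw [← Finset.sum_mul]

/-- `(Σ x)² ≤ 2 |t| Σ x²` in `ℝ≥0∞`. -/
lemma sq_sum_le {ι : Type*} (t : Finset ι) (x : ι → ℝ≥0∞) :
    (∑ l ∈ t, x l) ^ 2 ≤ 2 * t.card * ∑ l ∈ t, (x l) ^ 2 := by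
  have key : ∀ a b : ℝ≥0∞, a * b ≤ a^2 + b^2 := by
    intro a b
    rcases le_total a b with h | h
    · calc a * b ≤ b * b := mul_le_mul' h le_rfl
        _ = b^2 := (sq b).symm
        _ ≤ a^2 + b^2 := le_add_self
    · calc a * b ≤ a * a := mul_le_mul' le_rfl h
        _ = a^2 := (sq a).symm
        _ ≤ a^2 + b^2 := le_self_add
  calc (∑ l ∈ t, x l) ^ 2 = ∑ l ∈ t, ∑ m ∈ t, x l * x m := by
        rw [sq, Finset.sum_mul_sum]
    _ ≤ ∑ l ∈ t, ∑ m ∈ t, ((x l)^2 + (x m)^2) :=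
        Finset.sum_le_sum fun l _ => Finset.sum_le_sum fun m _ => key _ _
    _ = 2 * t.card * ∑ l ∈ t, (x l) ^ 2 := by
        simp only [Finset.sum_add_distrib, Finset.sum_const, nsmul_eq_mul,
          ← Finset.mul_sum]
        rw [two_mul, add_mul]

/-- The embedding of `ℤ^d` into Euclidean space. -/
noncomputable def toE {d : ℕ} : Zd d →+ EuclideanSpace ℝ (Fin d) where
  toFun j := WithLp.toLp 2 (fun i => (j i : ℝ))
  map_zero' := by ext i; simp
  map_add' a b := by
    ext i
    show ((a i + b i : ℤ) : ℝ) = (a i : ℝ) + (b i : ℝ)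
    push_cast; ring

lemma enorm_eq_norm_toE {d : ℕ} (j : Zd d) : enorm j = ‖toE j‖ := by
  rw [EuclideanSpace.norm_eq, enorm]
  congr 1
  refine Finset.sum_congr rfl fun i _ => ?_
  rw [Real.norm_eq_abs, sq_abs]; rfl

lemma enorm_nonneg {d : ℕ} (j : Zd d) : 0 ≤ enorm j := Real.sqrt_nonneg _

lemma enorm_pm_smul {d : ℕ} {ε : ℤ} (hε : ε = 1 ∨ ε = -1) (x : Zd d) :
    enorm (ε • x) = enorm x := by
  rw [enorm_eq_norm_toE, enorm_eq_norm_toE, map_zsmul]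
  rcases hε with h | h <;> subst h <;> simp

lemma pm_smul_smul {d : ℕ} {ε : ℤ} (hε : ε = 1 ∨ ε = -1) (x : Zd d) :
    ε • ε • x = x := by
  rcases hε with h | h <;> subst h <;> simp

lemma abs_le_enorm {d : ℕ} (j : Zd d) (i : Fin d) : |(j i : ℝ)| ≤ enorm j := by
  rw [enorm, ← Real.sqrt_sq_eq_abs]
  exact Real.sqrt_le_sqrt
    (Finset.single_le_sum (fun m _ => sq_nonneg ((j m : ℝ))) (Finset.mem_univ i))

/-! ### Weights -/

/-- The weight `1 + |j|` as an extended nonnegative real. -/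
noncomputable def wt {d : ℕ} (j : Zd d) : ℝ≥0∞ := ENNReal.ofReal (1 + enorm j)

lemma one_le_base {d : ℕ} (j : Zd d) : (1:ℝ) ≤ 1 + enorm j := by
  linarith [enorm_nonneg j]

lemma base_pos {d : ℕ} (j : Zd d) : (0:ℝ) < 1 + enorm j :=
  lt_of_lt_of_le one_pos (one_le_base j)

lemma wt_ne_zero {d : ℕ} (j : Zd d) : wt j ≠ 0 := by
  simp only [wt, ne_eq, ENNReal.ofReal_eq_zero, not_le]; exact base_pos j

lemma wt_ne_top {d : ℕ} (j : Zd d) : wt j ≠ ⊤ := ENNReal.ofReal_ne_top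

lemma wt_rpow {d : ℕ} (j : Zd d) (p : ℝ) :
    wt j ^ p = ENNReal.ofReal ((1 + enorm j) ^ p) := by
  rw [wt]; exact ENNReal.ofReal_rpow_of_pos (base_pos j)

lemma wt_rpow_ne_top {d : ℕ} (j : Zd d) (p : ℝ) : wt j ^ p ≠ ⊤ := by
  rw [wt_rpow]; exact ENNReal.ofReal_ne_top

/-! ### The dimensional sum -/

lemma summable_int_aux {p : ℝ} (hp : 1 < p) :
    Summable (fun n : ℤ => (1 + |(n : ℝ)|) ^ (-p)) := by
  have h := Real.summable_abs_int_rpow hp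
  have h0 : Summable (fun n : ℤ => if n = 0 then (1:ℝ) else 0) :=
    summable_of_ne_finset_zero (s := {0}) (by intro n hn; simp at hn ⊢; exact hn)
  refine (h.add h0).of_nonneg_of_le (fun n => Real.rpow_nonneg (by positivity) _) (fun n => ?_)
  by_cases hn : n = 0
  · subst hn; simp [Real.one_rpow]
    exact Real.rpow_nonneg le_rfl _
  · have h1 : (1:ℝ) ≤ |(n:ℝ)| := by
      rw [← Int.cast_abs]; exact_mod_cast Int.one_le_abs (by simpa using hn)
    have := Real.rpow_le_rpow_of_nonpos (lt_of_lt_of_le one_pos h1)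
      (by linarith : |(n:ℝ)| ≤ 1 + |(n:ℝ)|) (neg_nonpos.mpr (by linarith : (0:ℝ) ≤ p))
    simp only [hn, if_false, add_zero]
    exact this

/-- Finiteness of `Σ_j (1+|j|)^{-q}` for `q > d`. -/
lemma Sd_ne_top {d : ℕ} (hd : 1 ≤ d) {q : ℝ} (hq : (d:ℝ) < q) :
    ∑' j : Zd d, wt j ^ (-q) ≠ ⊤ := by
  have hd0 : (0:ℝ) < d := by exact_mod_cast Nat.lt_of_lt_of_le Nat.zero_lt_one hd
  have hp : 1 < q / d := (one_lt_div hd0).mpr hq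
  have hq0 : 0 < q := lt_trans hd0 hq
  have key : ∀ j : Zd d, wt j ^ (-q) ≤ ∏ i, (ENNReal.ofReal (1 + |(j i : ℝ)|)) ^ (-(q/d)) := by
    intro j
    have hreal : (1 + enorm j) ^ (-q) ≤ ∏ i, (1 + |(j i : ℝ)|) ^ (-(q/d)) := by
      have hP : ∀ i ∈ Finset.univ, (0:ℝ) ≤ 1 + |(j i : ℝ)| := fun i _ => by positivity
      have hPpos : (0:ℝ) < ∏ i, (1 + |(j i : ℝ)|) :=
        Finset.prod_pos (fun i _ => by positivity)
      have hPle : ∏ i, (1 + |(j i : ℝ)|) ≤ (1 + enorm j) ^ (d:ℕ) := by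
        calc ∏ i, (1 + |(j i : ℝ)|) ≤ ∏ _i : Fin d, (1 + enorm j) :=
              Finset.prod_le_prod (fun i _ => by positivity)
                (fun i _ => by linarith [abs_le_enorm j i])
          _ = (1 + enorm j) ^ (d:ℕ) := by
              rw [Finset.prod_const, Finset.card_univ, Fintype.card_fin]
      calc (1 + enorm j) ^ (-q)
          = ((1 + enorm j) ^ (d:ℕ)) ^ (-(q/d)) := by
            rw [← Real.rpow_natCast (1 + enorm j) d, ← Real.rpow_mul (base_pos j).le]
            congr 1
            field_simp
        _ ≤ (∏ i, (1 + |(j i : ℝ)|)) ^ (-(q/d)) :=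
            Real.rpow_le_rpow_of_nonpos hPpos hPle (neg_nonpos.mpr (by positivity))
        _ = ∏ i, (1 + |(j i : ℝ)|) ^ (-(q/d)) := by
            rw [← Real.finset_prod_rpow Finset.univ _ hP]
    calc wt j ^ (-q) = ENNReal.ofReal ((1 + enorm j) ^ (-q)) := wt_rpow j _
      _ ≤ ENNReal.ofReal (∏ i, (1 + |(j i : ℝ)|) ^ (-(q/d))) := ENNReal.ofReal_le_ofReal hreal
      _ = ∏ i, ENNReal.ofReal ((1 + |(j i : ℝ)|) ^ (-(q/d))) :=
          ENNReal.ofReal_prod_of_nonneg (fun i _ => Real.rpow_nonneg (by positivity) _)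
      _ = ∏ i, (ENNReal.ofReal (1 + |(j i : ℝ)|)) ^ (-(q/d)) := by
          refine Finset.prod_congr rfl fun i _ => ?_
          exact (ENNReal.ofReal_rpow_of_pos (by positivity)).symm
  have hb := tsum_pi_fintype (ι := Fin d) (α := ℤ)
    (fun i n => (ENNReal.ofReal (1 + |(n : ℝ)|)) ^ (-(q/d)))
  have h1 : (∑' n : ℤ, (ENNReal.ofReal (1 + |(n:ℝ)|)) ^ (-(q/d))) ≠ ⊤ := by
    have heq : ∀ n : ℤ, (ENNReal.ofReal (1 + |(n:ℝ)|)) ^ (-(q/d))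
        = ENNReal.ofReal ((1 + |(n:ℝ)|) ^ (-(q/d))) :=
      fun n => ENNReal.ofReal_rpow_of_pos (by positivity)
    rw [tsum_congr heq, ← ENNReal.ofReal_tsum_of_nonneg
      (fun n => Real.rpow_nonneg (by positivity) _) (summable_int_aux hp)]
    exact ENNReal.ofReal_ne_top
  refine ne_top_of_le_ne_top ?_ (ENNReal.tsum_le_tsum key)
  rw [hb]
  exact (ENNReal.prod_lt_top (fun i _ => h1.lt_top)).ne

/-! ### Correspondence with the real norms -/

lemma term_eq {d : ℕ} (t : ℝ) (v : Zd d → ℂ) (j : Zd d) :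
    wt j ^ (2*t) * ((‖v j‖₊ : ℝ≥0∞)) ^ 2
      = ENNReal.ofReal ((1 + enorm j) ^ (2 * t) * ‖v j‖ ^ 2) := by
  rw [ENNReal.ofReal_mul (Real.rpow_nonneg (base_pos j).le _), wt_rpow]
  congr 1
  rw [← ofReal_norm_eq_coe_nnnorm, ← ENNReal.ofReal_pow (norm_nonneg _)]

/-- The `ℝ≥0∞`-valued squared norm. -/
noncomputable def EN (d : ℕ) (t : ℝ) (v : Zd d → ℂ) : ℝ≥0∞ :=
  ∑' j : Zd d, wt j ^ (2*t) * ((‖v j‖₊ : ℝ≥0∞)) ^ 2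

lemma term_nonneg {d : ℕ} (t : ℝ) (v : Zd d → ℂ) (j : Zd d) :
    0 ≤ (1 + enorm j) ^ (2 * t) * ‖v j‖ ^ 2 := by
  have := Real.rpow_nonneg (base_pos j).le (2*t)
  positivity

lemma EN_eq_ofReal {d : ℕ} {t : ℝ} {v : Zd d → ℂ} (h : MemZ d t v) :
    EN d t v = ENNReal.ofReal ((zNorm d t v) ^ 2) := by
  rw [EN, tsum_congr (term_eq t v), ← ENNReal.ofReal_tsum_of_nonneg (term_nonneg t v) h]
  congr 1
  rw [zNorm, Real.sq_sqrt (tsum_nonneg (term_nonneg t v))]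

lemma EN_ne_top {d : ℕ} {t : ℝ} {v : Zd d → ℂ} (h : MemZ d t v) : EN d t v ≠ ⊤ := by
  rw [EN_eq_ofReal h]; exact ENNReal.ofReal_ne_top

lemma memZ_of_EN_ne_top {d : ℕ} {t : ℝ} {v : Zd d → ℂ} (h : EN d t v ≠ ⊤) :
    MemZ d t v := by
  rw [EN, tsum_congr (term_eq t v)] at h
  have := ENNReal.summable_toReal h
  refine this.congr fun j => ?_
  rw [ENNReal.toReal_ofReal (term_nonneg t v j)]

lemma zNorm_eq_sqrt_toReal {d : ℕ} {t : ℝ} {v : Zd d → ℂ} (h : MemZ d t v) :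
    zNorm d t v = Real.sqrt (EN d t v).toReal := by
  rw [EN_eq_ofReal h, ENNReal.toReal_ofReal (sq_nonneg _),
    Real.sqrt_sq (show 0 ≤ zNorm d t v from Real.sqrt_nonneg _)]

lemma zNorm_nonneg {d : ℕ} (t : ℝ) (v : Zd d → ℂ) : 0 ≤ zNorm d t v :=
  Real.sqrt_nonneg _

lemma memZ_mono {d : ℕ} {t t' : ℝ} (htt : t' ≤ t) {v : Zd d → ℂ} (h : MemZ d t v) :
    MemZ d t' v := by
  refine h.of_nonneg_of_le (term_nonneg t' v) (fun j => ?_)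
  refine mul_le_mul_of_nonneg_right ?_ (sq_nonneg _)
  exact Real.rpow_le_rpow_of_exponent_le (one_le_base j) (by linarith)

/-- `‖Σ f‖ₑ ≤ Σ ‖f‖ₑ` for complex series. -/
lemma enorm_tsum_le {ι : Type*} (f : ι → ℂ) :
    ((‖∑' i, f i‖₊ : ℝ≥0∞)) ≤ ∑' i, ((‖f i‖₊ : ℝ≥0∞)) := by
  by_cases hs : Summable (fun i => ‖f i‖)
  · rw [← ofReal_norm_eq_coe_nnnorm]
    calc ENNReal.ofReal ‖∑' i, f i‖ ≤ ENNReal.ofReal (∑' i, ‖f i‖) :=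
          ENNReal.ofReal_le_ofReal (norm_tsum_le_tsum_norm hs)
      _ = ∑' i, ENNReal.ofReal ‖f i‖ := ENNReal.ofReal_tsum_of_nonneg (fun _ => norm_nonneg _) hs
      _ = ∑' i, ((‖f i‖₊ : ℝ≥0∞)) := tsum_congr fun i => ofReal_norm_eq_coe_nnnorm (f i)
  · have : ∑' i, ((‖f i‖₊ : ℝ≥0∞)) = ⊤ := by
      by_contra h
      exact hs (by simpa [← NNReal.summable_coe] using ENNReal.tsum_coe_ne_top_iff_summable.mp h)
    rw [this]; exact le_top

/-- technical Lemma, Appendix.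
Let `s > s₀ > d/2`, `r ≥ 1`, `σ₀,…,σ_r ∈ {−1,1}` and let `X_{j,j₁,…,j_r}` be completely
symmetric coefficients with `sup |X| ≤ M < ∞`. Then there is `C = C_{s,r} > 0` with
`‖X(u⁽¹⁾,…,u⁽ʳ⁾)‖_s ≤ C M Σ_{l} ‖u⁽¹⁾‖_{s₀} ⋯ ‖u⁽ˡ⁾‖_s ⋯ ‖u⁽ʳ⁾‖_{s₀}`. -/
theorem stmt_1 (d : ℕ) (hd : 1 ≤ d) (r : ℕ) (hr : 1 ≤ r)
    (s s₀ : ℝ) (hs₀ : (d : ℝ) / 2 < s₀) (hs : s₀ < s) :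
    ∃ C : ℝ, 0 < C ∧
      ∀ (σ : Fin (r + 1) → ℤ), (∀ l, σ l = 1 ∨ σ l = -1) →
      ∀ (c : (Fin (r + 1) → Zd d) → ℂ),
        (∀ (π : Equiv.Perm (Fin (r + 1))) (jv : Fin (r + 1) → Zd d), c (jv ∘ π) = c jv) →
      ∀ M : ℝ, (∀ jv, ‖c jv‖ ≤ M) →
      ∀ u : Fin r → (Zd d → ℂ), (∀ l, MemZ d s (u l)) →
        MemZ d s (Xfield d r σ c u) ∧
        zNorm d s (Xfield d r σ c u) ≤
          C * M * ∑ l : Fin r,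
            ∏ m : Fin r, (if m = l then zNorm d s (u m) else zNorm d s₀ (u m)) := by
  classical
  have hdR : (0:ℝ) < d := by exact_mod_cast hd
  have hs0pos : 0 < s₀ := lt_trans (by linarith) hs₀
  have hspos : 0 < s := lt_trans hs0pos hs
  have hqd : (d:ℝ) < 2 * s₀ := by linarith
  set Sd : ℝ≥0∞ := ∑' x : Zd d, wt x ^ (-(2*s₀)) with hSddef
  have hSd : Sd ≠ ⊤ := Sd_ne_top hd hqd
  set K₀ : ℝ≥0∞ := ((r:ℝ≥0∞) ^ s)^2 * (2 * r) * Sd ^ (r-1) with hK₀def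
  have hK₀ : K₀ ≠ ⊤ := by
    have h1 : ((r:ℝ≥0∞) ^ s) ≠ ⊤ :=
      ENNReal.rpow_ne_top_of_nonneg hspos.le (ENNReal.natCast_ne_top r)
    exact ENNReal.mul_ne_top (ENNReal.mul_ne_top (ENNReal.pow_ne_top h1)
      (ENNReal.mul_ne_top ENNReal.ofNat_ne_top (ENNReal.natCast_ne_top r)))
      (ENNReal.pow_ne_top hSd)
  set C : ℝ := Real.sqrt K₀.toReal + 1 with hCdef
  have hC0 : 0 < C := by positivity
  have hCK : K₀ ≤ (ENNReal.ofReal C) ^ 2 := by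
    rw [← ENNReal.ofReal_toReal hK₀, ← ENNReal.ofReal_pow hC0.le]
    refine ENNReal.ofReal_le_ofReal ?_
    have hb : Real.sqrt K₀.toReal ^ 2 = K₀.toReal := Real.sq_sqrt ENNReal.toReal_nonneg
    nlinarith [Real.sqrt_nonneg K₀.toReal]
  refine ⟨C, hC0, ?_⟩
  intro σ hσ c _hsymm M hM u hu
  have hM0 : 0 ≤ M := le_trans (norm_nonneg _) (hM (fun _ _ => 0))
  set Me : ℝ≥0∞ := ENNReal.ofReal M with hMedef
  set A : Fin r → Zd d → ℝ≥0∞ := fun m x => ((‖u m x‖₊ : ℝ≥0∞)) with hAdef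
  set Con : Zd d → (Fin r → Zd d) → Prop :=
    fun j k => σ 0 • j + ∑ l, σ l.succ • k l = (0:Zd d) with hCondef
  set T : Zd d → ℝ≥0∞ :=
    fun j => ∑' k : Fin r → Zd d, if Con j k then ∏ m, A m (k m) else 0 with hTdef
  set G : Fin r → Zd d → ℝ≥0∞ :=
    fun l j => ∑' k : Fin r → Zd d,
      if Con j k then wt (k l) ^ s * ∏ m, A m (k m) else 0 with hGdef
  -- the solving lemma for signs
  have hsolve : ∀ (ε : ℤ), (ε = 1 ∨ ε = -1) → ∀ (x y : Zd d), (ε • x = y ↔ x = ε • y) := by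
    intro ε hε x y
    constructor
    · intro h; rw [← h, pm_smul_smul hε]
    · intro h; rw [h, pm_smul_smul hε]
  -- 1. pointwise bound on the field
  have hXbound : ∀ j : Zd d, ((‖Xfield d r σ c u j‖₊ : ℝ≥0∞)) ≤ Me * T j := by
    intro j
    calc ((‖Xfield d r σ c u j‖₊ : ℝ≥0∞))
        ≤ ∑' k : Fin r → Zd d,
            ((‖if Con j k then c (Fin.cons j k) * ∏ l, u l (k l) else 0‖₊ : ℝ≥0∞)) := by
          exact enorm_tsum_le _
      _ ≤ ∑' k : Fin r → Zd d, (if Con j k then Me * ∏ m, A m (k m) else 0) := by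
          refine ENNReal.tsum_le_tsum fun k => ?_
          by_cases h : Con j k
          · rw [if_pos h, if_pos h]
            calc ((‖c (Fin.cons j k) * ∏ l, u l (k l)‖₊ : ℝ≥0∞))
                = ((‖c (Fin.cons j k)‖₊ : ℝ≥0∞)) * ∏ m, ((‖u m (k m)‖₊ : ℝ≥0∞)) := by
                  rw [nnnorm_mul, nnnorm_prod]
                  push_cast
                  rfl
              _ ≤ Me * ∏ m, A m (k m) := by
                  refine mul_le_mul' ?_ le_rfl
                  rw [← ofReal_norm_eq_coe_nnnorm, hMedef]
                  exact ENNReal.ofReal_le_ofReal (by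
                    exact hM _)
          · rw [if_neg h, if_neg h]; simp
      _ = Me * T j := by
          rw [hTdef, ← ENNReal.tsum_mul_left]
          exact tsum_congr fun k => by by_cases h : Con j k <;> simp [h]
  -- 2. weight splitting
  have hwsplit : ∀ (j : Zd d) (k : Fin r → Zd d), Con j k →
      wt j ^ s ≤ (r:ℝ≥0∞) ^ s * ∑ l, wt (k l) ^ s := by
    intro j k hcon
    -- first, `enorm j ≤ Σ enorm (k l)`
    have h1 : enorm j ≤ ∑ l, enorm (k l) := by
      have h2 : σ 0 • j = -(∑ l, σ l.succ • k l) := by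
        rw [hCondef] at hcon
        exact add_eq_zero_iff_eq_neg.mp hcon
      have h3 : enorm j = enorm (∑ l, σ l.succ • k l) := by
        rw [← enorm_pm_smul (hσ 0) j, h2, ← neg_one_zsmul,
          enorm_pm_smul (Or.inr rfl)]
      rw [h3]
      calc enorm (∑ l, σ l.succ • k l) = ‖toE (∑ l, σ l.succ • k l)‖ := enorm_eq_norm_toE _
        _ = ‖∑ l, toE (σ l.succ • k l)‖ := by rw [map_sum]
        _ ≤ ∑ l, ‖toE (σ l.succ • k l)‖ := norm_sum_le _ _
        _ = ∑ l, enorm (σ l.succ • k l) := by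
            exact Finset.sum_congr rfl fun l _ => (enorm_eq_norm_toE _).symm
        _ = ∑ l, enorm (k l) := Finset.sum_congr rfl fun l _ => enorm_pm_smul (hσ l.succ) _
    -- maximizing index
    obtain ⟨l₀, -, hl₀⟩ := Finset.exists_max_image Finset.univ
      (fun l : Fin r => 1 + enorm (k l)) ⟨⟨0, hr⟩, Finset.mem_univ _⟩
    have h4 : 1 + enorm j ≤ (r:ℝ) * (1 + enorm (k l₀)) := by
      have h5 : 1 + enorm j ≤ ∑ l, (1 + enorm (k l)) := by
        rw [Finset.sum_add_distrib, Finset.sum_const, Finset.card_univ, Fintype.card_fin,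
          nsmul_eq_mul, mul_one]
        have : (1:ℝ) ≤ r := by exact_mod_cast hr
        linarith
      refine le_trans h5 ?_
      calc ∑ l, (1 + enorm (k l)) ≤ ∑ _l : Fin r, (1 + enorm (k l₀)) :=
            Finset.sum_le_sum fun l _ => hl₀ l (Finset.mem_univ l)
        _ = (r:ℝ) * (1 + enorm (k l₀)) := by
            rw [Finset.sum_const, Finset.card_univ, Fintype.card_fin, nsmul_eq_mul]
    -- real rpow bound
    have h6 : (1 + enorm j) ^ s ≤ (r:ℝ) ^ s * ∑ l, (1 + enorm (k l)) ^ s := by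
      calc (1 + enorm j) ^ s ≤ ((r:ℝ) * (1 + enorm (k l₀))) ^ s :=
            Real.rpow_le_rpow (base_pos j).le h4 hspos.le
        _ = (r:ℝ) ^ s * (1 + enorm (k l₀)) ^ s :=
            Real.mul_rpow (by positivity) (base_pos (k l₀)).le
        _ ≤ (r:ℝ) ^ s * ∑ l, (1 + enorm (k l)) ^ s := by
            refine mul_le_mul_of_nonneg_left ?_ (Real.rpow_nonneg (by positivity) s)
            exact Finset.single_le_sum
              (fun l _ => Real.rpow_nonneg (base_pos (k l)).le s) (Finset.mem_univ l₀)
    -- transfer to ℝ≥0∞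
    calc wt j ^ s = ENNReal.ofReal ((1 + enorm j) ^ s) := wt_rpow j s
      _ ≤ ENNReal.ofReal ((r:ℝ) ^ s * ∑ l, (1 + enorm (k l)) ^ s) :=
          ENNReal.ofReal_le_ofReal h6
      _ = (r:ℝ≥0∞) ^ s * ∑ l, wt (k l) ^ s := by
          rw [ENNReal.ofReal_mul (Real.rpow_nonneg (by positivity) s),
            ENNReal.ofReal_sum_of_nonneg
              (fun l _ => Real.rpow_nonneg (base_pos (k l)).le s)]
          congr 1
          · rw [← ENNReal.ofReal_rpow_of_pos (by positivity : (0:ℝ) < (r:ℝ))]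
            congr 1
            exact ENNReal.ofReal_natCast r
          · exact Finset.sum_congr rfl fun l _ => (wt_rpow (k l) s).symm
  -- 3. splitting of the weighted sum
  have hTsplit : ∀ j : Zd d, wt j ^ s * T j ≤ (r:ℝ≥0∞) ^ s * ∑ l, G l j := by
    intro j
    have h1 : wt j ^ s * T j
        = ∑' k : Fin r → Zd d, if Con j k then wt j ^ s * ∏ m, A m (k m) else 0 := by
      rw [hTdef, ← ENNReal.tsum_mul_left]
      exact tsum_congr fun k => by by_cases h : Con j k <;> simp [h]
    rw [h1]
    have h2 : (r:ℝ≥0∞) ^ s * ∑ l, G l j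
        = ∑' k : Fin r → Zd d,
            if Con j k then (r:ℝ≥0∞) ^ s * ∑ l, wt (k l) ^ s * ∏ m, A m (k m) else 0 := by
      rw [hGdef]
      rw [← Summable.tsum_finsetSum (fun l _ => ENNReal.summable), ← ENNReal.tsum_mul_left]
      refine tsum_congr fun k => ?_
      by_cases h : Con j k <;> simp [h, Finset.mul_sum]
    rw [h2]
    refine ENNReal.tsum_le_tsum fun k => ?_
    by_cases h : Con j k
    · rw [if_pos h, if_pos h]
      calc wt j ^ s * ∏ m, A m (k m)
          ≤ ((r:ℝ≥0∞) ^ s * ∑ l, wt (k l) ^ s) * ∏ m, A m (k m) :=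
            mul_le_mul' (hwsplit j k h) le_rfl
        _ = (r:ℝ≥0∞) ^ s * ∑ l, wt (k l) ^ s * ∏ m, A m (k m) := by
            rw [mul_assoc, Finset.sum_mul]
    · rw [if_neg h, if_neg h]
  -- the (r-1)-fold product
  set Lp : Fin r → ℝ≥0∞ :=
    fun l => ∏ m ∈ Finset.univ.erase l, ∑' x : Zd d, A m x with hLpdef
  -- 4. the main per-l bound
  have half : (0:ℝ) ≤ 1/2 := by norm_num
  have hG2 : ∀ l : Fin r, (∑' j : Zd d, (G l j) ^ 2) ≤ EN d s (u l) * (Lp l) ^ 2 := by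
    intro l
    set P : (Fin r → Zd d) → ℝ≥0∞ := fun k => ∏ m ∈ Finset.univ.erase l, A m (k m) with hPdef
    set F : (Fin r → Zd d) → ℝ≥0∞ :=
      fun k => wt (k l) ^ (2*s) * (A l (k l))^2 * P k with hFdef
    have hmemsub : ∀ m : Fin r, m ∈ Finset.univ.erase l ↔ m ≠ l := by
      intro m; simp [Finset.mem_erase]
    -- (i) the g-sum
    have hgs : ∀ j : Zd d,
        (∑' k : Fin r → Zd d, if Con j k then P k else 0) = Lp l := by
      intro j
      have he1 : ∀ p : Zd d × ({m : Fin r // m ≠ l} → Zd d),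
          ((Equiv.piSplitAt l (fun _ : Fin r => Zd d)).symm p) l = p.1 := by
        intro p; simp [Equiv.piSplitAt]
      have he2 : ∀ (p : Zd d × ({m : Fin r // m ≠ l} → Zd d)) (m' : {m : Fin r // m ≠ l}),
          ((Equiv.piSplitAt l (fun _ : Fin r => Zd d)).symm p) m'.1 = p.2 m' := by
        intro p m'; simp [Equiv.piSplitAt, m'.2]
      have hksplit : ∀ p : Zd d × ({m : Fin r // m ≠ l} → Zd d),
          ∑ m, σ m.succ • ((Equiv.piSplitAt l (fun _ : Fin r => Zd d)).symm p) m
            = σ l.succ • p.1 + ∑ m' : {m : Fin r // m ≠ l}, σ m'.1.succ • p.2 m' := by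
        intro p
        rw [← Finset.add_sum_erase Finset.univ _ (Finset.mem_univ l)]
        congr 1
        · rw [he1]
        · rw [Finset.sum_subtype (Finset.univ.erase l) hmemsub
            (fun m => σ m.succ • ((Equiv.piSplitAt l (fun _ : Fin r => Zd d)).symm p) m)]
          exact Finset.sum_congr rfl fun m' _ => by rw [he2]
      have hcona : ∀ p : Zd d × ({m : Fin r // m ≠ l} → Zd d),
          Con j ((Equiv.piSplitAt l (fun _ : Fin r => Zd d)).symm p) ↔ p.1 = σ l.succ •
            (-(σ 0 • j + ∑ m' : {m : Fin r // m ≠ l}, σ m'.1.succ • p.2 m')) := by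
        intro p
        simp only [hCondef]
        rw [hksplit p, add_left_comm, add_eq_zero_iff_eq_neg]
        exact hsolve (σ l.succ) (hσ l.succ) p.1 _
      have hPb : ∀ (a : Zd d) (b : {m : Fin r // m ≠ l} → Zd d),
          P ((Equiv.piSplitAt l (fun _ : Fin r => Zd d)).symm (a, b))
            = ∏ m' : {m : Fin r // m ≠ l}, A m'.1 (b m') := by
        intro a b
        rw [hPdef]
        dsimp only
        rw [Finset.prod_subtype (Finset.univ.erase l) hmemsub
          (fun m => A m (((Equiv.piSplitAt l (fun _ : Fin r => Zd d)).symm (a, b)) m))]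
        exact Finset.prod_congr rfl fun m' _ => by rw [he2]
      calc (∑' k : Fin r → Zd d, if Con j k then P k else 0)
          = ∑' p : Zd d × ({m : Fin r // m ≠ l} → Zd d),
              (if Con j ((Equiv.piSplitAt l (fun _ : Fin r => Zd d)).symm p)
                then P ((Equiv.piSplitAt l (fun _ : Fin r => Zd d)).symm p) else 0) :=
            (Equiv.tsum_eq (Equiv.piSplitAt l (fun _ : Fin r => Zd d)).symm
              (fun k => if Con j k then P k else 0)).symm
        _ = ∑' (a : Zd d) (b : {m : Fin r // m ≠ l} → Zd d),
              (if Con j ((Equiv.piSplitAt l (fun _ : Fin r => Zd d)).symm (a, b))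
                then P ((Equiv.piSplitAt l (fun _ : Fin r => Zd d)).symm (a, b)) else 0) :=
            ENNReal.tsum_prod (f := fun (a : Zd d) (b : {m : Fin r // m ≠ l} → Zd d) =>
              if Con j ((Equiv.piSplitAt l (fun _ : Fin r => Zd d)).symm (a, b))
                then P ((Equiv.piSplitAt l (fun _ : Fin r => Zd d)).symm (a, b)) else 0)
        _ = ∑' (b : {m : Fin r // m ≠ l} → Zd d), ∑' (a : Zd d),
              (if a = σ l.succ • (-(σ 0 • j + ∑ m' : {m : Fin r // m ≠ l}, σ m'.1.succ • b m'))
                then (∏ m' : {m : Fin r // m ≠ l}, A m'.1 (b m')) else 0) := by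
            rw [ENNReal.tsum_comm]
            exact tsum_congr fun b => tsum_congr fun a =>
              if_congr (hcona (a, b)) (hPb a b) rfl
        _ = ∑' (b : {m : Fin r // m ≠ l} → Zd d),
              ∏ m' : {m : Fin r // m ≠ l}, A m'.1 (b m') :=
            tsum_congr fun b => tsum_ite_eq _ _
        _ = ∏ m' : {m : Fin r // m ≠ l}, ∑' x : Zd d, A m'.1 x :=
            tsum_pi_fintype (fun (m' : {m : Fin r // m ≠ l}) (x : Zd d) => A m'.1 x)
        _ = Lp l := by
            rw [hLpdef]
            dsimp only
            rw [Finset.prod_subtype (Finset.univ.erase l) hmemsub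
              (fun m => ∑' x : Zd d, A m x)]
    -- (ii) the f-sum
    have hfs : (∑' j : Zd d, ∑' k : Fin r → Zd d, if Con j k then F k else 0)
        = EN d s (u l) * Lp l := by
      rw [ENNReal.tsum_comm]
      have hinner : ∀ k : Fin r → Zd d,
          (∑' j : Zd d, if Con j k then F k else 0) = F k := by
        intro k
        have hconj : ∀ j : Zd d, Con j k ↔ j = σ 0 • (-(∑ m, σ m.succ • k m)) := by
          intro j
          simp only [hCondef]
          rw [add_eq_zero_iff_eq_neg]
          exact hsolve (σ 0) (hσ 0) j _
        calc (∑' j : Zd d, if Con j k then F k else 0)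
            = ∑' j : Zd d, if j = σ 0 • (-(∑ m, σ m.succ • k m)) then F k else 0 :=
              tsum_congr fun j => if_congr (hconj j) rfl rfl
          _ = F k := tsum_ite_eq _ _
      rw [tsum_congr hinner]
      have hFH : ∀ k : Fin r → Zd d, F k
          = ∏ m, (fun (m : Fin r) (x : Zd d) =>
              if m = l then wt x ^ (2*s) * (A l x)^2 else A m x) m (k m) := by
        intro k
        rw [← Finset.mul_prod_erase Finset.univ _ (Finset.mem_univ l)]
        rw [hFdef, hPdef]
        dsimp only
        rw [if_pos rfl]
        congr 1
        refine Finset.prod_congr rfl fun m hm => ?_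
        rw [if_neg (Finset.mem_erase.mp hm).1]
      rw [tsum_congr hFH, tsum_pi_fintype (fun (m : Fin r) (x : Zd d) =>
        if m = l then wt x ^ (2*s) * (A l x)^2 else A m x)]
      rw [← Finset.mul_prod_erase Finset.univ _ (Finset.mem_univ l)]
      have h5 : (∑' x : Zd d, if l = l then wt x ^ (2*s) * (A l x)^2 else A l x)
          = EN d s (u l) := by
        rw [EN]
        exact tsum_congr fun x => by rw [if_pos rfl]
      rw [h5]
      congr 1
      rw [hLpdef]
      dsimp only
      refine Finset.prod_congr rfl fun m hm => ?_
      exact tsum_congr fun x => by rw [if_neg (Finset.mem_erase.mp hm).1]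
    -- (iii) Cauchy-Schwarz in k
    have hCS2 : ∀ j : Zd d,
        (G l j)^2 ≤ (∑' k : Fin r → Zd d, if Con j k then F k else 0) * Lp l := by
      intro j
      have hpt : ∀ k : Fin r → Zd d,
          (if Con j k then wt (k l) ^ s * ∏ m, A m (k m) else 0)
            = (if Con j k then F k else 0) ^ (1/2:ℝ)
              * (if Con j k then P k else 0) ^ (1/2:ℝ) := by
        intro k
        by_cases h : Con j k
        · rw [if_pos h, if_pos h, if_pos h]
          have hsplitprod : ∏ m, A m (k m) = A l (k l) * P k := by
            rw [hPdef]
            dsimp only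
            rw [← Finset.mul_prod_erase Finset.univ _ (Finset.mem_univ l)]
          have e1 : (wt (k l) ^ (2*s)) ^ (1/2:ℝ) = wt (k l) ^ s := by
            rw [← ENNReal.rpow_mul]; congr 1; ring
          have e2 : ((A l (k l))^2) ^ (1/2:ℝ) = A l (k l) := by
            rw [pow_two_eq_rpow, ← ENNReal.rpow_mul]; norm_num
          have e3 : (P k) ^ (1/2:ℝ) * (P k) ^ (1/2:ℝ) = P k := by
            rw [← ENNReal.mul_rpow_of_nonneg _ _ half, ← sq, pow_two_eq_rpow,
              ← ENNReal.rpow_mul]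
            norm_num
          rw [hFdef]
          dsimp only
          rw [ENNReal.mul_rpow_of_nonneg _ _ half, ENNReal.mul_rpow_of_nonneg _ _ half,
            e1, e2]
          calc wt (k l) ^ s * ∏ m, A m (k m)
              = wt (k l) ^ s * (A l (k l) * P k) := by rw [hsplitprod]
            _ = wt (k l) ^ s * A l (k l) * ((P k) ^ (1/2:ℝ) * (P k) ^ (1/2:ℝ)) := by
                rw [e3]; ring
            _ = wt (k l) ^ s * A l (k l) * (P k) ^ (1/2:ℝ) * (P k) ^ (1/2:ℝ) := by ring
        · rw [if_neg h, if_neg h, if_neg h,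
            ENNReal.zero_rpow_of_pos (by norm_num : (0:ℝ) < 1/2), zero_mul]
      calc (G l j)^2
          = (∑' k : Fin r → Zd d, (if Con j k then F k else 0) ^ (1/2:ℝ)
              * (if Con j k then P k else 0) ^ (1/2:ℝ))^2 := by
            rw [hGdef]
            dsimp only
            rw [tsum_congr hpt]
        _ ≤ (∑' k : Fin r → Zd d, if Con j k then F k else 0)
              * (∑' k : Fin r → Zd d, if Con j k then P k else 0) := tsum_CS _ _
        _ = (∑' k : Fin r → Zd d, if Con j k then F k else 0) * Lp l := by rw [hgs j]
    -- conclusion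
    calc (∑' j : Zd d, (G l j) ^ 2)
        ≤ ∑' j : Zd d, (∑' k : Fin r → Zd d, if Con j k then F k else 0) * Lp l :=
          ENNReal.tsum_le_tsum hCS2
      _ = (∑' j : Zd d, ∑' k : Fin r → Zd d, if Con j k then F k else 0) * Lp l :=
          ENNReal.tsum_mul_right
      _ = EN d s (u l) * Lp l * Lp l := by rw [hfs]
      _ = EN d s (u l) * (Lp l)^2 := by rw [mul_assoc, ← sq]
  -- 5. one-dimensional Cauchy-Schwarz
  have hCS1 : ∀ m : Fin r, (∑' x : Zd d, A m x) ^ 2 ≤ Sd * EN d s₀ (u m) := by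
    intro m
    have hpt : ∀ x : Zd d, A m x
        = (wt x ^ (-(2*s₀))) ^ (1/2:ℝ) * (wt x ^ (2*s₀) * (A m x)^2) ^ (1/2:ℝ) := by
      intro x
      have e1 : (wt x ^ (-(2*s₀))) ^ (1/2:ℝ) = wt x ^ (-s₀) := by
        rw [← ENNReal.rpow_mul]; congr 1; ring
      have e2 : (wt x ^ (2*s₀)) ^ (1/2:ℝ) = wt x ^ s₀ := by
        rw [← ENNReal.rpow_mul]; congr 1; ring
      have e3 : ((A m x)^2) ^ (1/2:ℝ) = A m x := by
        rw [pow_two_eq_rpow, ← ENNReal.rpow_mul]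
        norm_num
      rw [ENNReal.mul_rpow_of_nonneg _ _ (by norm_num : (0:ℝ) ≤ 1/2), e1, e2, e3,
        ← mul_assoc, ← ENNReal.rpow_add _ _ (wt_ne_zero x) (wt_ne_top x)]
      norm_num
    calc (∑' x : Zd d, A m x) ^ 2
        = (∑' x : Zd d,
            (wt x ^ (-(2*s₀))) ^ (1/2:ℝ) * (wt x ^ (2*s₀) * (A m x)^2) ^ (1/2:ℝ)) ^ 2 := by
          rw [tsum_congr hpt]
      _ ≤ (∑' x : Zd d, wt x ^ (-(2*s₀))) * (∑' x : Zd d, wt x ^ (2*s₀) * (A m x)^2) :=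
          tsum_CS _ _
      _ = Sd * EN d s₀ (u m) := by rw [hSddef, EN]
  -- 6. assembly
  set R : ℝ := ∑ l : Fin r, ∏ m : Fin r,
    (if m = l then zNorm d s (u m) else zNorm d s₀ (u m)) with hRdef
  have hR0 : 0 ≤ R := by
    rw [hRdef]
    exact Finset.sum_nonneg fun l _ => Finset.prod_nonneg fun m _ => by
      split <;> exact zNorm_nonneg _ _
  have hRHS0 : 0 ≤ C * M * R := mul_nonneg (mul_nonneg hC0.le hM0) hR0
  have hENl : ∀ m : Fin r, EN d s (u m) = (ENNReal.ofReal (zNorm d s (u m)))^2 := by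
    intro m
    rw [EN_eq_ofReal (hu m), ENNReal.ofReal_pow (zNorm_nonneg _ _)]
  have hEN0 : ∀ m : Fin r, EN d s₀ (u m) = (ENNReal.ofReal (zNorm d s₀ (u m)))^2 := by
    intro m
    rw [EN_eq_ofReal (memZ_mono hs.le (hu m)), ENNReal.ofReal_pow (zNorm_nonneg _ _)]
  have hPr : ∀ l : Fin r,
      ENNReal.ofReal (∏ m : Fin r, if m = l then zNorm d s (u m) else zNorm d s₀ (u m))
        = ENNReal.ofReal (zNorm d s (u l))
          * ∏ m ∈ Finset.univ.erase l, ENNReal.ofReal (zNorm d s₀ (u m)) := by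
    intro l
    rw [ENNReal.ofReal_prod_of_nonneg (fun m _ => by split <;> exact zNorm_nonneg _ _),
      ← Finset.mul_prod_erase Finset.univ _ (Finset.mem_univ l), if_pos rfl]
    congr 1
    exact Finset.prod_congr rfl fun m hm => by rw [if_neg (Finset.mem_erase.mp hm).1]
  have hterm : ∀ l : Fin r, EN d s (u l) * (Lp l)^2
      ≤ Sd^(r-1) * (ENNReal.ofReal
          (∏ m : Fin r, if m = l then zNorm d s (u m) else zNorm d s₀ (u m)))^2 := by
    intro l
    have hLp2 : (Lp l)^2 ≤ Sd^(r-1) * ∏ m ∈ Finset.univ.erase l, EN d s₀ (u m) := by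
      calc (Lp l)^2 = ∏ m ∈ Finset.univ.erase l, (∑' x : Zd d, A m x)^2 := by
            rw [hLpdef]
            dsimp only
            rw [← Finset.prod_pow]
        _ ≤ ∏ m ∈ Finset.univ.erase l, (Sd * EN d s₀ (u m)) :=
            Finset.prod_le_prod' (fun m _ => hCS1 m)
        _ = Sd^((Finset.univ.erase l).card) * ∏ m ∈ Finset.univ.erase l, EN d s₀ (u m) := by
            rw [Finset.prod_mul_distrib, Finset.prod_const]
        _ = Sd^(r-1) * ∏ m ∈ Finset.univ.erase l, EN d s₀ (u m) := by
            rw [Finset.card_erase_of_mem (Finset.mem_univ l), Finset.card_univ,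
              Fintype.card_fin]
    calc EN d s (u l) * (Lp l)^2
        ≤ EN d s (u l) * (Sd^(r-1) * ∏ m ∈ Finset.univ.erase l, EN d s₀ (u m)) :=
          mul_le_mul' le_rfl hLp2
      _ = Sd^(r-1) * (EN d s (u l) * ∏ m ∈ Finset.univ.erase l, EN d s₀ (u m)) := by ring
      _ = Sd^(r-1) * (ENNReal.ofReal
            (∏ m : Fin r, if m = l then zNorm d s (u m) else zNorm d s₀ (u m)))^2 := by
          congr 1
          have h1 : EN d s (u l) * ∏ m ∈ Finset.univ.erase l, EN d s₀ (u m)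
              = (ENNReal.ofReal (zNorm d s (u l)))^2
                * ∏ m ∈ Finset.univ.erase l, (ENNReal.ofReal (zNorm d s₀ (u m)))^2 := by
            rw [hENl l]
            exact congrArg _ (Finset.prod_congr rfl fun m _ => hEN0 m)
          rw [h1, Finset.prod_pow, ← mul_pow, ← hPr l]
  have hsum2 : ∑ l : Fin r, EN d s (u l) * (Lp l)^2
      ≤ Sd^(r-1) * (ENNReal.ofReal R)^2 := by
    calc ∑ l : Fin r, EN d s (u l) * (Lp l)^2
        ≤ ∑ l : Fin r, Sd^(r-1) * (ENNReal.ofReal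
            (∏ m : Fin r, if m = l then zNorm d s (u m) else zNorm d s₀ (u m)))^2 :=
          Finset.sum_le_sum fun l _ => hterm l
      _ = Sd^(r-1) * ∑ l : Fin r, (ENNReal.ofReal
            (∏ m : Fin r, if m = l then zNorm d s (u m) else zNorm d s₀ (u m)))^2 := by
          rw [Finset.mul_sum]
      _ ≤ Sd^(r-1) * (∑ l : Fin r, ENNReal.ofReal
            (∏ m : Fin r, if m = l then zNorm d s (u m) else zNorm d s₀ (u m)))^2 :=
          mul_le_mul' le_rfl (sum_sq_le_sq_sum _ _)
      _ = Sd^(r-1) * (ENNReal.ofReal R)^2 := by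
          rw [hRdef, ENNReal.ofReal_sum_of_nonneg
            (fun l _ => Finset.prod_nonneg fun m _ => by split <;> exact zNorm_nonneg _ _)]
  have t1 : ∀ j : Zd d, wt j ^ (2*s) * ((‖Xfield d r σ c u j‖₊ : ℝ≥0∞))^2
      ≤ (Me^2 * ((r:ℝ≥0∞)^s)^2) * (2 * (r:ℝ≥0∞) * ∑ l, (G l j)^2) := by
    intro j
    have hw2 : wt j ^ (2*s) = (wt j ^ s)^2 := by
      rw [pow_two_eq_rpow, ← ENNReal.rpow_mul]
      congr 1
      ring
    calc wt j ^ (2*s) * ((‖Xfield d r σ c u j‖₊ : ℝ≥0∞))^2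
        = (wt j ^ s * ((‖Xfield d r σ c u j‖₊ : ℝ≥0∞)))^2 := by rw [hw2, mul_pow]
      _ ≤ (wt j ^ s * (Me * T j))^2 :=
          pow_le_pow_left' (mul_le_mul' le_rfl (hXbound j)) 2
      _ = Me^2 * (wt j ^ s * T j)^2 := by rw [mul_left_comm, mul_pow]
      _ ≤ Me^2 * ((r:ℝ≥0∞)^s * ∑ l, G l j)^2 :=
          mul_le_mul' le_rfl (pow_le_pow_left' (hTsplit j) 2)
      _ = Me^2 * (((r:ℝ≥0∞)^s)^2 * (∑ l, G l j)^2) := by rw [mul_pow]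
      _ ≤ Me^2 * (((r:ℝ≥0∞)^s)^2 * (2 * (r:ℝ≥0∞) * ∑ l, (G l j)^2)) := by
          refine mul_le_mul' le_rfl (mul_le_mul' le_rfl ?_)
          have h := sq_sum_le Finset.univ (fun l => G l j)
          rw [show ((Finset.univ : Finset (Fin r)).card) = r from by simp] at h
          exact h
      _ = (Me^2 * ((r:ℝ≥0∞)^s)^2) * (2 * (r:ℝ≥0∞) * ∑ l, (G l j)^2) := by ring
  have hfinal : EN d s (Xfield d r σ c u) ≤ (ENNReal.ofReal (C * M * R))^2 := by
    calc EN d s (Xfield d r σ c u)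
        = ∑' j : Zd d, wt j ^ (2*s) * ((‖Xfield d r σ c u j‖₊ : ℝ≥0∞))^2 := by rw [EN]
      _ ≤ ∑' j : Zd d, (Me^2 * ((r:ℝ≥0∞)^s)^2) * (2 * (r:ℝ≥0∞) * ∑ l, (G l j)^2) :=
          ENNReal.tsum_le_tsum t1
      _ = (Me^2 * ((r:ℝ≥0∞)^s)^2) * (2 * (r:ℝ≥0∞) * ∑ l, ∑' j : Zd d, (G l j)^2) := by
          rw [ENNReal.tsum_mul_left]
          congr 1
          rw [ENNReal.tsum_mul_left]
          congr 1
          exact Summable.tsum_finsetSum (fun l _ => ENNReal.summable)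
      _ ≤ (Me^2 * ((r:ℝ≥0∞)^s)^2) * (2 * (r:ℝ≥0∞) * ∑ l, EN d s (u l) * (Lp l)^2) :=
          mul_le_mul' le_rfl (mul_le_mul' le_rfl (Finset.sum_le_sum fun l _ => hG2 l))
      _ ≤ (Me^2 * ((r:ℝ≥0∞)^s)^2) * (2 * (r:ℝ≥0∞) * (Sd^(r-1) * (ENNReal.ofReal R)^2)) :=
          mul_le_mul' le_rfl (mul_le_mul' le_rfl hsum2)
      _ = Me^2 * K₀ * (ENNReal.ofReal R)^2 := by rw [hK₀def]; ring
      _ ≤ Me^2 * ((ENNReal.ofReal C)^2) * (ENNReal.ofReal R)^2 :=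
          mul_le_mul' (mul_le_mul' le_rfl hCK) le_rfl
      _ = (ENNReal.ofReal (C * M * R))^2 := by
          rw [ENNReal.ofReal_mul (mul_nonneg hC0.le hM0), ENNReal.ofReal_mul hC0.le,
            mul_pow, mul_pow]
          ring
  have hne : EN d s (Xfield d r σ c u) ≠ ⊤ :=
    ne_top_of_le_ne_top (ENNReal.pow_ne_top ENNReal.ofReal_ne_top) hfinal
  have hmem := memZ_of_EN_ne_top hne
  refine ⟨hmem, ?_⟩
  rw [zNorm_eq_sqrt_toReal hmem]
  have hle : (EN d s (Xfield d r σ c u)).toReal ≤ (C * M * R)^2 := by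
    have h2 := ENNReal.toReal_mono (ENNReal.pow_ne_top ENNReal.ofReal_ne_top) hfinal
    rwa [ENNReal.toReal_pow, ENNReal.toReal_ofReal hRHS0] at h2
  calc Real.sqrt (EN d s (Xfield d r σ c u)).toReal
      ≤ Real.sqrt ((C * M * R)^2) := Real.sqrt_le_sqrt hle
    _ = C * M * R := Real.sqrt_sq hRHS0

end AG
end

section
/- Let P₁ ∈ 𝒫_{r₁} and P₂ ∈ 𝒫_{r₂}. Then the Poisson bracket {P₁;P₂}, defined by {P₁;P₂} := i Σ_{j∈ℤ^d} ( ∂P₁/∂u_{(j,−)} · ∂P₂/∂u_{(j,+)} − ∂P₁/∂u_{(j,+)} · ∂P₂/∂u_{(j,−)} ), is a well-defined element of 𝒫_{r₁+r₂−2}, and for every R > 0 one has ‖{P₁;P₂}‖_R ≤ (2 r₁ r₂ / R²) · ‖P₁‖_R · ‖P₂‖_R. -/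
open scoped BigOperators

namespace AG

abbrev Idx (d : ℕ) := Zd d × Bool

noncomputable def inorm {d : ℕ} (J : Idx d) : ℝ := enorm J.1

def sgn (b : Bool) : ℤ := if b then 1 else -1

noncomputable def sgnC (b : Bool) : ℂ := if b then 1 else -1

def conjIdx {d : ℕ} (J : Idx d) : Idx d := (J.1, !J.2)

abbrev Seq (d : ℕ) := Idx d → ℂ

noncomputable def sobNormSq (d : ℕ) (s : ℝ) (u : Seq d) : ℝ :=
  ∑' J : Idx d, (1 + inorm J) ^ (2 * s) * ‖u J‖ ^ 2

noncomputable def sobNorm (d : ℕ) (s : ℝ) (u : Seq d) : ℝ := Real.sqrt (sobNormSq d s u)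

def MemSob (d : ℕ) (s : ℝ) (u : Seq d) : Prop :=
  Summable (fun J : Idx d => (1 + inorm J) ^ (2 * s) * ‖u J‖ ^ 2)

noncomputable def momentum {d r : ℕ} (Jv : Fin r → Idx d) : Zd d :=
  ∑ l, sgn ((Jv l).2) • ((Jv l).1)

structure Poly (d r : ℕ) where
  coeff : (Fin r → Idx d) → ℂ
  symm : ∀ (π : Equiv.Perm (Fin r)) (Jv : Fin r → Idx d), coeff (Jv ∘ π) = coeff Jv
  mom : ∀ Jv, coeff Jv ≠ 0 → momentum Jv = 0
  reality : ∀ Jv, (starRingEnd ℂ) (coeff (fun l => conjIdx (Jv l))) = coeff Jv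
  bdd : ∃ M : ℝ, ∀ Jv, ‖coeff Jv‖ ≤ M

noncomputable def Poly.norm {d r : ℕ} (P : Poly d r) (R : ℝ) : ℝ :=
  (⨆ Jv : Fin r → Idx d, ‖P.coeff Jv‖) * R ^ r

noncomputable def Poly.eval {d r : ℕ} (P : Poly d r) (u : Seq d) : ℂ :=
  ∑' Jv : Fin r → Idx d, P.coeff Jv * ∏ l, u (Jv l)

noncomputable def Poly.pderiv {d r : ℕ} (P : Poly d r) (K : Idx d) (u : Seq d) : ℂ :=
  ∑' Jv : Fin r → Idx d, ∑ l : Fin r,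
    (if Jv l = K then P.coeff Jv * ∏ m ∈ Finset.univ.erase l, u (Jv m) else 0)

noncomputable def Poly.field {d r : ℕ} (P : Poly d r) (u : Seq d) : Seq d :=
  fun J => Complex.I * sgnC J.2 * P.pderiv (conjIdx J) u

noncomputable def freqSum {d r : ℕ} (ω : Zd d → ℝ) (Jv : Fin r → Idx d) : ℝ :=
  ∑ l, (sgn ((Jv l).2) : ℝ) * ω ((Jv l).1)


/-- The (formal) Poisson bracket `{P₁;P₂}` evaluated at `u`:
`i ∑_{ j ∈ ℤ^d } ( ∂P₁/∂u_{(j,−)} ∂P₂/∂u_{(j,+)} − ∂P₁/∂u_{(j,+)} ∂P₂/∂u_{(j,−)} )`,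
where `(j,true)=(j,+)` and `(j,false)=(j,−)`. -/
noncomputable def bracketEval {d r₁ r₂ : ℕ} (P₁ : Poly d r₁) (P₂ : Poly d r₂)
    (u : Seq d) : ℂ :=
  Complex.I * ∑' j : Zd d,
    (P₁.pderiv (j, false) u * P₂.pderiv (j, true) u
      - P₁.pderiv (j, true) u * P₂.pderiv (j, false) u)


/-! ### Auxiliary lemmas -/

section Aux

variable {d : ℕ}

lemma sgn_not (b : Bool) : sgn (!b) = - sgn b := by cases b <;> simp [sgn]

lemma momentum_cons {r : ℕ} (K : Idx d) (A : Fin r → Idx d) :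
    momentum (Fin.cons K A) = sgn K.2 • K.1 + momentum A := by
  simp [momentum, Fin.sum_univ_succ]

lemma momentum_conj {r : ℕ} (A : Fin r → Idx d) :
    momentum (fun l => conjIdx (A l)) = - momentum A := by
  simp only [momentum, conjIdx, sgn_not, neg_smul, ← Finset.sum_neg_distrib]

lemma momentum_comp {r : ℕ} (A : Fin r → Idx d) (π : Equiv.Perm (Fin r)) :
    momentum (A ∘ π) = momentum A := by
  simp only [momentum, Function.comp_apply]
  exact Equiv.sum_comp π (fun l => sgn ((A l).2) • ((A l).1))

lemma momentum_split {m n : ℕ} (Jv : Fin (m + n) → Idx d) :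
    momentum Jv
      = momentum (fun i => Jv (Fin.castAdd n i)) + momentum (fun i => Jv (Fin.natAdd m i)) := by
  simp only [momentum]
  exact Fin.sum_univ_add _

lemma conj_cons {r : ℕ} (K : Idx d) (A : Fin r → Idx d) :
    (fun l => conjIdx (Fin.cons (α := fun _ => Idx d) K A l))
      = Fin.cons (conjIdx K) (fun l => conjIdx (A l)) := by
  funext l
  refine Fin.cases ?_ ?_ l <;> simp

lemma prod_erase_eq {n : ℕ} (l : Fin (n + 1)) (g : Fin (n + 1) → ℂ) :
    ∏ m ∈ Finset.univ.erase l, g m = ∏ i : Fin n, g (l.succAbove i) := by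
  have himg : Finset.univ.erase l = Finset.image l.succAbove Finset.univ := by
    ext x
    simp only [Finset.mem_erase, Finset.mem_univ, and_true, Finset.mem_image, true_and]
    constructor
    · exact fun hx => Fin.exists_succAbove_eq hx
    · rintro ⟨i, rfl⟩; exact Fin.succAbove_ne l i
  rw [himg, Finset.prod_image (fun a _ b _ h => Fin.succAbove_right_injective h)]

lemma insertNth_eq_comp {n : ℕ} (l : Fin (n + 1)) (K : Idx d) (A : Fin n → Idx d) :
    l.insertNth K A
      = Fin.cons K A ∘ ((finSuccEquiv' l).trans (finSuccEquiv n).symm) := by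
  funext x
  rcases eq_or_ne x l with rfl | hx
  · simp [Fin.insertNth_apply_same, finSuccEquiv'_at, finSuccEquiv_symm_none]
  · obtain ⟨i, rfl⟩ := Fin.exists_succAbove_eq hx
    simp [Fin.insertNth_apply_succAbove, finSuccEquiv'_succAbove, finSuccEquiv_symm_some]

/-- Reduction of the partial derivative to a single contracted sum, using symmetry. -/
lemma pderiv_reduce {m : ℕ} (P : Poly d (m + 1)) (K : Idx d) (u : Seq d)
    (hu : (Function.support u).Finite) :
    P.pderiv K u
      = ((m + 1 : ℕ) : ℂ) * ∑' A : Fin m → Idx d, P.coeff (Fin.cons K A) * ∏ i, u (A i) := by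
  classical
  set T : Finset (Idx d) := hu.toFinset with hT
  have hmemT : ∀ J : Idx d, J ∈ T ↔ u J ≠ 0 := by
    intro J; simp [hT, Set.Finite.mem_toFinset, Function.mem_support]
  set f : (Fin (m + 1) → Idx d) → Fin (m + 1) → ℂ := fun Jv l =>
    if Jv l = K then P.coeff Jv * ∏ m' ∈ Finset.univ.erase l, u (Jv m') else 0 with hf
  set S : Finset (Fin (m + 1) → Idx d) :=
    Fintype.piFinset (fun _ => insert K T) with hS
  have hsupp : ∀ l : Fin (m + 1), ∀ Jv ∉ S, f Jv l = 0 := by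
    intro l Jv hJv
    have : ¬ ∀ i, Jv i ∈ insert K T := by
      intro h; exact hJv (Fintype.mem_piFinset.2 h)
    push_neg at this
    obtain ⟨i, hi⟩ := this
    by_cases hl : Jv l = K
    · have hil : i ≠ l := by
        intro h; subst h; exact hi (by simp [hl])
      have hu0 : u (Jv i) = 0 := by
        by_contra h
        exact hi (Finset.mem_insert_of_mem ((hmemT _).2 h))
      have : ∏ m' ∈ Finset.univ.erase l, u (Jv m') = 0 :=
        Finset.prod_eq_zero (by simp [hil]) hu0
      simp [hf, hl, this]
    · simp [hf, hl]
  have hsummable : ∀ l : Fin (m + 1), Summable (fun Jv => f Jv l) := fun l =>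
    summable_of_ne_finset_zero (s := S) (hsupp l)
  have step1 : P.pderiv K u = ∑ l : Fin (m + 1), ∑' Jv, f Jv l := by
    rw [Poly.pderiv]
    exact Summable.tsum_finsetSum (fun l _ => hsummable l)
  have step2 : ∀ l : Fin (m + 1),
      (∑' Jv, f Jv l) = ∑' A : Fin m → Idx d, P.coeff (Fin.cons K A) * ∏ i, u (A i) := by
    intro l
    have hinj : Function.Injective
        (fun A : Fin m → Idx d => l.insertNth (α := fun _ => Idx d) K A) := by
      intro A B h
      funext i
      have := congrFun h (l.succAbove i)
      simpa [Fin.insertNth_apply_succAbove] using this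
    have hrange : Function.support (fun Jv => f Jv l)
        ⊆ Set.range (fun A : Fin m → Idx d => l.insertNth (α := fun _ => Idx d) K A) := by
      intro Jv hJv
      have hl : Jv l = K := by
        by_contra h; exact hJv (by simp [hf, h])
      refine ⟨fun i => Jv (l.succAbove i), ?_⟩
      funext x
      rcases eq_or_ne x l with rfl | hx
      · simp [Fin.insertNth_apply_same, hl]
      · obtain ⟨i, rfl⟩ := Fin.exists_succAbove_eq hx
        simp [Fin.insertNth_apply_succAbove]
    rw [← hinj.tsum_eq hrange]
    refine tsum_congr fun A => ?_
    have h1 : f (l.insertNth K A) l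
        = P.coeff (l.insertNth K A)
          * ∏ m' ∈ Finset.univ.erase l, u (l.insertNth (α := fun _ => Idx d) K A m') := by
      simp [hf, Fin.insertNth_apply_same]
    rw [h1, prod_erase_eq]
    have h2 : ∀ i : Fin m, l.insertNth (α := fun _ => Idx d) K A (l.succAbove i) = A i :=
      fun i => by simp
    have h3 : P.coeff (l.insertNth K A) = P.coeff (Fin.cons K A) := by
      rw [insertNth_eq_comp]
      exact P.symm _ _
    rw [h3]
    congr 1
    exact Finset.prod_congr rfl (fun i _ => by rw [h2])
  calc P.pderiv K u = ∑ l : Fin (m + 1), ∑' Jv, f Jv l := step1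
    _ = ∑ _l : Fin (m + 1), ∑' A : Fin m → Idx d, P.coeff (Fin.cons K A) * ∏ i, u (A i) :=
        Finset.sum_congr rfl (fun l _ => step2 l)
    _ = ((m + 1 : ℕ) : ℂ) * ∑' A : Fin m → Idx d, P.coeff (Fin.cons K A) * ∏ i, u (A i) := by
        rw [Finset.sum_const, Finset.card_univ, Fintype.card_fin, nsmul_eq_mul]

lemma tsum_coeff_prod {k : ℕ} (c : (Fin k → Idx d) → ℂ) (u : Seq d)
    (hu : (Function.support u).Finite) :
    (∑' A : Fin k → Idx d, c A * ∏ i, u (A i))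
      = ∑ A ∈ Fintype.piFinset (fun _ : Fin k => hu.toFinset), c A * ∏ i, u (A i) := by
  classical
  refine tsum_eq_sum ?_
  intro A hA
  have : ¬ ∀ i, A i ∈ hu.toFinset := fun h => hA (Fintype.mem_piFinset.2 h)
  push_neg at this
  obtain ⟨i, hi⟩ := this
  have hu0 : u (A i) = 0 := by
    by_contra h
    exact hi (by simp [Set.Finite.mem_toFinset, Function.mem_support, h])
  rw [mul_eq_zero]
  exact Or.inr (Finset.prod_eq_zero (Finset.mem_univ i) hu0)

end Aux

/-! ### The bracket polynomial -/

section Main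

variable {d m₁ m₂ : ℕ}

/-- The unsymmetrized coefficient of the Poisson bracket, as a function of the two blocks. -/
noncomputable def qc (P₁ : Poly d (m₁ + 1)) (P₂ : Poly d (m₂ + 1))
    (A : Fin m₁ → Idx d) (B : Fin m₂ → Idx d) : ℂ :=
  (((m₁ + 1) * (m₂ + 1) : ℕ) : ℂ) * Complex.I *
    (P₁.coeff (Fin.cons (momentum A, false) A) * P₂.coeff (Fin.cons (momentum A, true) B)
      - P₁.coeff (Fin.cons (-momentum A, true) A) * P₂.coeff (Fin.cons (-momentum A, false) B))

noncomputable def qt (P₁ : Poly d (m₁ + 1)) (P₂ : Poly d (m₂ + 1))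
    (Jv : Fin (m₁ + m₂) → Idx d) : ℂ :=
  qc P₁ P₂ (fun i => Jv (Fin.castAdd m₂ i)) (fun i => Jv (Fin.natAdd m₁ i))

/-- The symmetrized coefficient. -/
noncomputable def Qc (P₁ : Poly d (m₁ + 1)) (P₂ : Poly d (m₂ + 1))
    (Jv : Fin (m₁ + m₂) → Idx d) : ℂ :=
  (((m₁ + m₂).factorial : ℂ))⁻¹ * ∑ π : Equiv.Perm (Fin (m₁ + m₂)), qt P₁ P₂ (Jv ∘ π)

variable (P₁ : Poly d (m₁ + 1)) (P₂ : Poly d (m₂ + 1))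

lemma qc_mom {A : Fin m₁ → Idx d} {B : Fin m₂ → Idx d} (h : qc P₁ P₂ A B ≠ 0) :
    momentum A + momentum B = 0 := by
  rw [qc] at h
  have hsub : P₁.coeff (Fin.cons (momentum A, false) A) * P₂.coeff (Fin.cons (momentum A, true) B)
      - P₁.coeff (Fin.cons (-momentum A, true) A) * P₂.coeff (Fin.cons (-momentum A, false) B)
      ≠ 0 := by
    intro h0; rw [h0] at h; simp at h
  by_cases h1 : P₁.coeff (Fin.cons (momentum A, false) A)
      * P₂.coeff (Fin.cons (momentum A, true) B) ≠ 0
  · have h2 : P₂.coeff (Fin.cons (momentum A, true) B) ≠ 0 := by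
      intro h0; exact h1 (by rw [h0, mul_zero])
    have := P₂.mom _ h2
    rw [momentum_cons] at this
    simpa [sgn] using this
  · push_neg at h1
    have h2 : P₁.coeff (Fin.cons (-momentum A, true) A)
        * P₂.coeff (Fin.cons (-momentum A, false) B) ≠ 0 := by
      intro h0; exact hsub (by rw [h1, h0, sub_zero])
    have h3 : P₂.coeff (Fin.cons (-momentum A, false) B) ≠ 0 := by
      intro h0; exact h2 (by rw [h0, mul_zero])
    have := P₂.mom _ h3
    rw [momentum_cons] at this
    simp only [sgn, if_neg Bool.false_ne_true, neg_smul, one_smul, neg_neg] at this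
    simpa [sgn] using this

lemma qc_conj (A : Fin m₁ → Idx d) (B : Fin m₂ → Idx d) :
    (starRingEnd ℂ) (qc P₁ P₂ (fun l => conjIdx (A l)) (fun l => conjIdx (B l)))
      = qc P₁ P₂ A B := by
  have hA : momentum (fun l => conjIdx (A l)) = - momentum A := momentum_conj A
  have e1 : Fin.cons ((-momentum A : Zd d), false) (fun l => conjIdx (A l))
      = fun l => conjIdx (Fin.cons (α := fun _ => Idx d) ((-momentum A : Zd d), true) A l) := by
    rw [conj_cons]; rfl
  have e2 : Fin.cons ((-momentum A : Zd d), true) (fun l => conjIdx (B l))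
      = fun l => conjIdx (Fin.cons (α := fun _ => Idx d) ((-momentum A : Zd d), false) B l) := by
    rw [conj_cons]; rfl
  have e3 : Fin.cons ((momentum A : Zd d), true) (fun l => conjIdx (A l))
      = fun l => conjIdx (Fin.cons (α := fun _ => Idx d) ((momentum A : Zd d), false) A l) := by
    rw [conj_cons]; rfl
  have e4 : Fin.cons ((momentum A : Zd d), false) (fun l => conjIdx (B l))
      = fun l => conjIdx (Fin.cons (α := fun _ => Idx d) ((momentum A : Zd d), true) B l) := by
    rw [conj_cons]; rfl
  rw [qc, qc, hA, neg_neg, e1, e2, e3, e4]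
  rw [map_mul, map_mul, map_sub, map_mul, map_mul, map_natCast, Complex.conj_I]
  rw [P₁.reality, P₂.reality, P₁.reality, P₂.reality]
  ring

lemma qc_bound (M₁ M₂ : ℝ) (hM₁ : ∀ Jv, ‖P₁.coeff Jv‖ ≤ M₁)
    (hM₂ : ∀ Jv, ‖P₂.coeff Jv‖ ≤ M₂)
    (hM₁0 : 0 ≤ M₁) (hM₂0 : 0 ≤ M₂) (A : Fin m₁ → Idx d) (B : Fin m₂ → Idx d) :
    ‖qc P₁ P₂ A B‖ ≤ 2 * ((m₁ + 1) * (m₂ + 1) : ℕ) * M₁ * M₂ := by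
  rw [qc, norm_mul, norm_mul, Complex.norm_natCast, Complex.norm_I, mul_one]
  have habs : ‖P₁.coeff (Fin.cons (momentum A, false) A) * P₂.coeff (Fin.cons (momentum A, true) B)
        - P₁.coeff (Fin.cons (-momentum A, true) A) * P₂.coeff (Fin.cons (-momentum A, false) B)‖
      ≤ M₁ * M₂ + M₁ * M₂ := by
    refine le_trans (norm_sub_le _ _) ?_
    gcongr
    · rw [norm_mul]
      exact mul_le_mul (hM₁ _) (hM₂ _) (norm_nonneg _) hM₁0
    · rw [norm_mul]
      exact mul_le_mul (hM₁ _) (hM₂ _) (norm_nonneg _) hM₁0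
  calc (((m₁ + 1) * (m₂ + 1) : ℕ) : ℝ) * ‖_‖
      ≤ (((m₁ + 1) * (m₂ + 1) : ℕ) : ℝ) * (M₁ * M₂ + M₁ * M₂) := by
        exact mul_le_mul_of_nonneg_left habs (by positivity)
    _ = 2 * ((m₁ + 1) * (m₂ + 1) : ℕ) * M₁ * M₂ := by ring

lemma Qc_bound (M₁ M₂ : ℝ) (hM₁ : ∀ Jv, ‖P₁.coeff Jv‖ ≤ M₁)
    (hM₂ : ∀ Jv, ‖P₂.coeff Jv‖ ≤ M₂)
    (hM₁0 : 0 ≤ M₁) (hM₂0 : 0 ≤ M₂) (Jv : Fin (m₁ + m₂) → Idx d) :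
    ‖Qc P₁ P₂ Jv‖ ≤ 2 * ((m₁ + 1) * (m₂ + 1) : ℕ) * M₁ * M₂ := by
  rw [Qc, norm_mul, norm_inv, Complex.norm_natCast]
  have hsum : ‖∑ π : Equiv.Perm (Fin (m₁ + m₂)), qt P₁ P₂ (Jv ∘ π)‖
      ≤ ((m₁ + m₂).factorial : ℝ) * (2 * ((m₁ + 1) * (m₂ + 1) : ℕ) * M₁ * M₂) := by
    refine le_trans (norm_sum_le _ _) ?_
    have : ∀ π : Equiv.Perm (Fin (m₁ + m₂)),
        ‖qt P₁ P₂ (Jv ∘ π)‖ ≤ 2 * ((m₁ + 1) * (m₂ + 1) : ℕ) * M₁ * M₂ := fun π =>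
      qc_bound P₁ P₂ M₁ M₂ hM₁ hM₂ hM₁0 hM₂0 _ _
    refine le_trans (Finset.sum_le_sum (fun π _ => this π)) ?_
    rw [Finset.sum_const, Finset.card_univ, nsmul_eq_mul]
    have : (Fintype.card (Equiv.Perm (Fin (m₁ + m₂))) : ℝ) = ((m₁ + m₂).factorial : ℝ) := by
      rw [Fintype.card_perm, Fintype.card_fin]
    rw [this]
  have hfac : (0 : ℝ) < ((m₁ + m₂).factorial : ℝ) := by
    exact_mod_cast Nat.factorial_pos _
  calc (((m₁ + m₂).factorial : ℝ))⁻¹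
        * ‖∑ π : Equiv.Perm (Fin (m₁ + m₂)), qt P₁ P₂ (Jv ∘ π)‖
      ≤ (((m₁ + m₂).factorial : ℝ))⁻¹
        * (((m₁ + m₂).factorial : ℝ) * (2 * ((m₁ + 1) * (m₂ + 1) : ℕ) * M₁ * M₂)) := by
        exact mul_le_mul_of_nonneg_left hsum (by positivity)
    _ = 2 * ((m₁ + 1) * (m₂ + 1) : ℕ) * M₁ * M₂ := by
        rw [inv_mul_cancel_left₀ (ne_of_gt hfac)]

/-- The Poisson bracket as a polynomial. -/
noncomputable def Qpoly : Poly d (m₁ + m₂) where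
  coeff := Qc P₁ P₂
  symm := by
    intro ρ Jv
    rw [Qc, Qc]
    congr 1
    have hcomp : ∀ π : Equiv.Perm (Fin (m₁ + m₂)),
        (Jv ∘ ρ) ∘ π = Jv ∘ ((Equiv.mulLeft ρ) π) := by
      intro π; funext x
      simp [Equiv.Perm.mul_apply]
    calc (∑ π : Equiv.Perm (Fin (m₁ + m₂)), qt P₁ P₂ ((Jv ∘ ρ) ∘ π))
        = ∑ π : Equiv.Perm (Fin (m₁ + m₂)), qt P₁ P₂ (Jv ∘ ((Equiv.mulLeft ρ) π)) := by
          exact Finset.sum_congr rfl (fun π _ => by rw [hcomp])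
      _ = ∑ σ : Equiv.Perm (Fin (m₁ + m₂)), qt P₁ P₂ (Jv ∘ σ) :=
          Equiv.sum_comp (Equiv.mulLeft ρ) (fun σ => qt P₁ P₂ (Jv ∘ σ))
  mom := by
    intro Jv h
    have h2 : ∑ π : Equiv.Perm (Fin (m₁ + m₂)), qt P₁ P₂ (Jv ∘ π) ≠ 0 := by
      intro hz
      exact h (by rw [Qc, hz, mul_zero])
    obtain ⟨π, -, hπ⟩ := Finset.exists_ne_zero_of_sum_ne_zero h2
    have h3 := qc_mom P₁ P₂ (A := fun i => (Jv ∘ π) (Fin.castAdd m₂ i))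
      (B := fun i => (Jv ∘ π) (Fin.natAdd m₁ i)) hπ
    rw [← momentum_comp Jv π, momentum_split (Jv ∘ π)]
    exact h3
  reality := by
    intro Jv
    rw [Qc, Qc, map_mul, map_inv₀, map_natCast, map_sum]
    congr 1
    refine Finset.sum_congr rfl (fun π _ => ?_)
    have hcomp : (fun l => conjIdx (Jv l)) ∘ π = fun l => conjIdx ((Jv ∘ π) l) := rfl
    rw [hcomp]
    exact qc_conj P₁ P₂ _ _
  bdd := by
    obtain ⟨M₁, hM₁⟩ := P₁.bdd
    obtain ⟨M₂, hM₂⟩ := P₂.bdd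
    refine ⟨2 * ((m₁ + 1) * (m₂ + 1) : ℕ) * (max M₁ 0) * (max M₂ 0), fun Jv => ?_⟩
    exact Qc_bound P₁ P₂ (max M₁ 0) (max M₂ 0)
      (fun Jv => le_trans (hM₁ Jv) (le_max_left _ _))
      (fun Jv => le_trans (hM₂ Jv) (le_max_left _ _))
      (le_max_right _ _) (le_max_right _ _) Jv


lemma sum_pi_comp_perm {k : ℕ} (T : Finset (Idx d)) (F : (Fin k → Idx d) → ℂ)
    (π : Equiv.Perm (Fin k)) :
    ∑ Jv ∈ Fintype.piFinset (fun _ : Fin k => T), F (Jv ∘ π)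
      = ∑ Jv ∈ Fintype.piFinset (fun _ : Fin k => T), F Jv := by
  refine Finset.sum_nbij' (fun Jv => Jv ∘ π) (fun Jv => Jv ∘ π.symm) ?_ ?_ ?_ ?_ ?_
  · intro Jv hJv
    exact Fintype.mem_piFinset.2 fun i => Fintype.mem_piFinset.1 hJv _
  · intro Jv hJv
    exact Fintype.mem_piFinset.2 fun i => Fintype.mem_piFinset.1 hJv _
  · intro Jv _
    funext x; simp
  · intro Jv _
    funext x; simp
  · intro Jv _; rfl

lemma sum_pi_split (T : Finset (Idx d)) (F : (Fin m₁ → Idx d) → (Fin m₂ → Idx d) → ℂ) :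
    ∑ Jv ∈ Fintype.piFinset (fun _ : Fin (m₁ + m₂) => T),
        F (fun i => Jv (Fin.castAdd m₂ i)) (fun i => Jv (Fin.natAdd m₁ i))
      = ∑ A ∈ Fintype.piFinset (fun _ : Fin m₁ => T),
          ∑ B ∈ Fintype.piFinset (fun _ : Fin m₂ => T), F A B := by
  rw [← Finset.sum_product']
  refine Finset.sum_nbij'
    (fun Jv => ((fun i => Jv (Fin.castAdd m₂ i)), (fun i => Jv (Fin.natAdd m₁ i))))
    (fun AB => Fin.append AB.1 AB.2) ?_ ?_ ?_ ?_ ?_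
  · intro Jv hJv
    rw [Finset.mem_product]
    exact ⟨Fintype.mem_piFinset.2 fun i => Fintype.mem_piFinset.1 hJv _,
      Fintype.mem_piFinset.2 fun i => Fintype.mem_piFinset.1 hJv _⟩
  · intro AB hAB
    rw [Finset.mem_product] at hAB
    refine Fintype.mem_piFinset.2 fun i => ?_
    refine Fin.addCases (fun j => ?_) (fun j => ?_) i
    · simpa [Fin.append_left] using Fintype.mem_piFinset.1 hAB.1 j
    · simpa [Fin.append_right] using Fintype.mem_piFinset.1 hAB.2 j
  · intro Jv _
    funext x
    refine Fin.addCases (fun j => ?_) (fun j => ?_) x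
    · simp [Fin.append_left]
    · simp [Fin.append_right]
  · intro AB _
    refine Prod.ext ?_ ?_ <;> funext j <;> simp [Fin.append_left, Fin.append_right]
  · intro Jv _; rfl

lemma Qpoly_eval (u : Seq d) (hu : (Function.support u).Finite) :
    (Qpoly P₁ P₂).eval u = bracketEval P₁ P₂ u := by
  classical
  -- notation
  set Pi1 := Fintype.piFinset (fun _ : Fin m₁ => hu.toFinset) with hPi1
  set Pi2 := Fintype.piFinset (fun _ : Fin m₂ => hu.toFinset) with hPi2
  set PiN := Fintype.piFinset (fun _ : Fin (m₁ + m₂) => hu.toFinset) with hPiN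
  -- reduced derivatives
  have hD1 : ∀ (σ : Bool) (j : Zd d), P₁.pderiv (j, σ) u
      = ((m₁ + 1 : ℕ) : ℂ) * ∑ A ∈ Pi1, P₁.coeff (Fin.cons ((j, σ) : Idx d) A) * ∏ i, u (A i) := by
    intro σ j
    rw [pderiv_reduce P₁ ((j, σ) : Idx d) u hu,
      tsum_coeff_prod (fun A => P₁.coeff (Fin.cons ((j, σ) : Idx d) A)) u hu]
  have hD2 : ∀ (σ : Bool) (j : Zd d), P₂.pderiv (j, σ) u
      = ((m₂ + 1 : ℕ) : ℂ) * ∑ B ∈ Pi2, P₂.coeff (Fin.cons ((j, σ) : Idx d) B) * ∏ i, u (B i) := by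
    intro σ j
    rw [pderiv_reduce P₂ ((j, σ) : Idx d) u hu,
      tsum_coeff_prod (fun B => P₂.coeff (Fin.cons ((j, σ) : Idx d) B)) u hu]
  set S1 : Bool → Zd d → ℂ :=
    fun σ j => ∑ A ∈ Pi1, P₁.coeff (Fin.cons ((j, σ) : Idx d) A) * ∏ i, u (A i) with hS1
  set S2 : Bool → Zd d → ℂ :=
    fun σ j => ∑ B ∈ Pi2, P₂.coeff (Fin.cons ((j, σ) : Idx d) B) * ∏ i, u (B i) with hS2
  set C : ℂ := (((m₁ + 1) * (m₂ + 1) : ℕ) : ℂ) with hC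
  set g : Zd d → ℂ := fun j => S1 false j * S2 true j - S1 true j * S2 false j with hg
  have hG : ∀ j : Zd d,
      P₁.pderiv (j, false) u * P₂.pderiv (j, true) u
        - P₁.pderiv (j, true) u * P₂.pderiv (j, false) u = C * g j := by
    intro j
    rw [hD1 false j, hD1 true j, hD2 false j, hD2 true j]
    simp only [hg, hS1, hS2, hC]
    push_cast
    ring
  -- collapse of the contracted sum
  have hkey1 : ∀ (j : Zd d) (A : Fin m₁ → Idx d),
      P₁.coeff (Fin.cons ((j, false) : Idx d) A) ≠ 0 → j = momentum A := by
    intro j A h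
    have h0 := P₁.mom _ h
    rw [momentum_cons] at h0
    simp only [sgn, Bool.false_eq_true, if_false, neg_smul, one_smul] at h0
    exact (neg_add_eq_zero.1 h0)
  have hkey2 : ∀ (j : Zd d) (A : Fin m₁ → Idx d),
      P₁.coeff (Fin.cons ((j, true) : Idx d) A) ≠ 0 → j = - momentum A := by
    intro j A h
    have h0 := P₁.mom _ h
    rw [momentum_cons] at h0
    simp only [sgn, if_true, one_smul] at h0
    exact eq_neg_of_add_eq_zero_left h0
  set Jset : Finset (Zd d) :=
    Pi1.image (fun A => momentum A) ∪ Pi1.image (fun A => - momentum A) with hJset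
  have hg0 : ∀ j ∉ Jset, g j = 0 := by
    intro j hj
    have hz1 : S1 false j = 0 := by
      refine Finset.sum_eq_zero fun A hA => ?_
      have : P₁.coeff (Fin.cons ((j, false) : Idx d) A) = 0 := by
        by_contra h
        exact hj (Finset.mem_union_left _
          (Finset.mem_image.2 ⟨A, hA, (hkey1 j A h).symm⟩))
      rw [this, zero_mul]
    have hz2 : S1 true j = 0 := by
      refine Finset.sum_eq_zero fun A hA => ?_
      have : P₁.coeff (Fin.cons ((j, true) : Idx d) A) = 0 := by
        by_contra h
        exact hj (Finset.mem_union_right _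
          (Finset.mem_image.2 ⟨A, hA, (hkey2 j A h).symm⟩))
      rw [this, zero_mul]
    simp [hg, hz1, hz2]
  have hgsum : (∑' j : Zd d, g j) = ∑ j ∈ Jset, g j := tsum_eq_sum hg0
  -- expand g as a double sum
  have hgj : ∀ j : Zd d, g j = ∑ A ∈ Pi1, ∑ B ∈ Pi2,
      ((P₁.coeff (Fin.cons ((j, false) : Idx d) A) * ∏ i, u (A i))
        * (P₂.coeff (Fin.cons ((j, true) : Idx d) B) * ∏ i, u (B i))
      - (P₁.coeff (Fin.cons ((j, true) : Idx d) A) * ∏ i, u (A i))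
        * (P₂.coeff (Fin.cons ((j, false) : Idx d) B) * ∏ i, u (B i))) := by
    intro j
    rw [hg]
    simp only [hS1, hS2]
    rw [Finset.sum_mul_sum, Finset.sum_mul_sum, ← Finset.sum_sub_distrib]
    exact Finset.sum_congr rfl fun A _ => by rw [← Finset.sum_sub_distrib]
  have hcollapse : ∑ j ∈ Jset, g j = ∑ A ∈ Pi1, ∑ B ∈ Pi2,
      ((P₁.coeff (Fin.cons ((momentum A, false) : Idx d) A) * ∏ i, u (A i))
        * (P₂.coeff (Fin.cons ((momentum A, true) : Idx d) B) * ∏ i, u (B i))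
      - (P₁.coeff (Fin.cons ((- momentum A, true) : Idx d) A) * ∏ i, u (A i))
        * (P₂.coeff (Fin.cons ((- momentum A, false) : Idx d) B) * ∏ i, u (B i))) := by
    rw [Finset.sum_congr rfl fun j _ => hgj j]
    rw [Finset.sum_comm]
    refine Finset.sum_congr rfl fun A hA => ?_
    rw [Finset.sum_comm]
    refine Finset.sum_congr rfl fun B _ => ?_
    rw [Finset.sum_sub_distrib]
    congr 1
    · refine Finset.sum_eq_single_of_mem (momentum A)
        (Finset.mem_union_left _ (Finset.mem_image_of_mem _ hA)) ?_
      intro j _ hj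
      have : P₁.coeff (Fin.cons ((j, false) : Idx d) A) = 0 := by
        by_contra h; exact hj (hkey1 j A h)
      rw [this, zero_mul, zero_mul]
    · refine Finset.sum_eq_single_of_mem (- momentum A)
        (Finset.mem_union_right _ (Finset.mem_image_of_mem _ hA)) ?_
      intro j _ hj
      have : P₁.coeff (Fin.cons ((j, true) : Idx d) A) = 0 := by
        by_contra h
        exact hj (by rw [hkey2 j A h])
      rw [this, zero_mul, zero_mul]
  -- right-hand side in final form
  have hRHS : bracketEval P₁ P₂ u
      = ∑ A ∈ Pi1, ∑ B ∈ Pi2, qc P₁ P₂ A B * ((∏ i, u (A i)) * ∏ i, u (B i)) := by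
    rw [bracketEval]
    rw [tsum_congr hG, tsum_mul_left, hgsum, hcollapse]
    rw [Finset.mul_sum, Finset.mul_sum]
    refine Finset.sum_congr rfl fun A _ => ?_
    rw [Finset.mul_sum, Finset.mul_sum]
    refine Finset.sum_congr rfl fun B _ => ?_
    rw [qc, hC]
    ring
  -- left-hand side
  have hcoeff : (Qpoly P₁ P₂).coeff = Qc P₁ P₂ := rfl
  have hL0 : (Qpoly P₁ P₂).eval u = ∑ Jv ∈ PiN, Qc P₁ P₂ Jv * ∏ l, u (Jv l) := by
    rw [Poly.eval, hcoeff]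
    exact tsum_coeff_prod (Qc P₁ P₂) u hu
  have hperm : ∀ π : Equiv.Perm (Fin (m₁ + m₂)),
      ∑ Jv ∈ PiN, qt P₁ P₂ (Jv ∘ π) * ∏ l, u (Jv l)
        = ∑ Jv ∈ PiN, qt P₁ P₂ Jv * ∏ l, u (Jv l) := by
    intro π
    have h1 : ∀ Jv : Fin (m₁ + m₂) → Idx d, (∏ l, u ((Jv ∘ π) l)) = ∏ l, u (Jv l) :=
      fun Jv => Equiv.prod_comp π (fun l => u (Jv l))
    calc ∑ Jv ∈ PiN, qt P₁ P₂ (Jv ∘ π) * ∏ l, u (Jv l)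
        = ∑ Jv ∈ PiN, qt P₁ P₂ (Jv ∘ π) * ∏ l, u ((Jv ∘ π) l) :=
          Finset.sum_congr rfl fun Jv _ => by rw [h1]
      _ = ∑ Jv ∈ PiN, qt P₁ P₂ Jv * ∏ l, u (Jv l) :=
          sum_pi_comp_perm _ (fun W => qt P₁ P₂ W * ∏ l, u (W l)) π
  have hfac : ((m₁ + m₂).factorial : ℂ) ≠ 0 := by
    exact_mod_cast Nat.factorial_ne_zero (m₁ + m₂)
  have hL1 : ∑ Jv ∈ PiN, Qc P₁ P₂ Jv * ∏ l, u (Jv l)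
      = ∑ Jv ∈ PiN, qt P₁ P₂ Jv * ∏ l, u (Jv l) := by
    calc ∑ Jv ∈ PiN, Qc P₁ P₂ Jv * ∏ l, u (Jv l)
        = (((m₁ + m₂).factorial : ℂ))⁻¹ * ∑ Jv ∈ PiN,
            ∑ π : Equiv.Perm (Fin (m₁ + m₂)), qt P₁ P₂ (Jv ∘ π) * ∏ l, u (Jv l) := by
          rw [Finset.mul_sum]
          refine Finset.sum_congr rfl fun Jv _ => ?_
          rw [Qc, mul_assoc, Finset.sum_mul]
      _ = (((m₁ + m₂).factorial : ℂ))⁻¹ * ∑ π : Equiv.Perm (Fin (m₁ + m₂)),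
            ∑ Jv ∈ PiN, qt P₁ P₂ (Jv ∘ π) * ∏ l, u (Jv l) := by rw [Finset.sum_comm]
      _ = (((m₁ + m₂).factorial : ℂ))⁻¹ * ∑ _π : Equiv.Perm (Fin (m₁ + m₂)),
            ∑ Jv ∈ PiN, qt P₁ P₂ Jv * ∏ l, u (Jv l) := by
          rw [Finset.sum_congr rfl fun π _ => hperm π]
      _ = ∑ Jv ∈ PiN, qt P₁ P₂ Jv * ∏ l, u (Jv l) := by
          rw [Finset.sum_const, Finset.card_univ, Fintype.card_perm, Fintype.card_fin,
            nsmul_eq_mul, inv_mul_cancel_left₀ hfac]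
  have hL2 : ∑ Jv ∈ PiN, qt P₁ P₂ Jv * ∏ l, u (Jv l)
      = ∑ A ∈ Pi1, ∑ B ∈ Pi2, qc P₁ P₂ A B * ((∏ i, u (A i)) * ∏ i, u (B i)) := by
    have hprod : ∀ Jv : Fin (m₁ + m₂) → Idx d,
        (∏ l, u (Jv l)) = (∏ i, u (Jv (Fin.castAdd m₂ i))) * ∏ i, u (Jv (Fin.natAdd m₁ i)) :=
      fun Jv => Fin.prod_univ_add (fun l => u (Jv l))
    calc ∑ Jv ∈ PiN, qt P₁ P₂ Jv * ∏ l, u (Jv l)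
        = ∑ Jv ∈ PiN, qc P₁ P₂ (fun i => Jv (Fin.castAdd m₂ i)) (fun i => Jv (Fin.natAdd m₁ i))
            * ((∏ i, u ((fun i => Jv (Fin.castAdd m₂ i)) i))
              * ∏ i, u ((fun i => Jv (Fin.natAdd m₁ i)) i)) := by
          refine Finset.sum_congr rfl fun Jv _ => ?_
          rw [hprod Jv]; rfl
      _ = ∑ A ∈ Pi1, ∑ B ∈ Pi2, qc P₁ P₂ A B * ((∏ i, u (A i)) * ∏ i, u (B i)) :=
          sum_pi_split hu.toFinset
            (fun A B => qc P₁ P₂ A B * ((∏ i, u (A i)) * ∏ i, u (B i)))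
  rw [hL0, hL1, hL2, hRHS]

lemma Qpoly_norm (R : ℝ) (hR : 0 < R) :
    (Qpoly P₁ P₂).norm R
      ≤ 2 * ((m₁ + 1 : ℕ) : ℝ) * ((m₂ + 1 : ℕ) : ℝ) / R ^ 2 * P₁.norm R * P₂.norm R := by
  obtain ⟨M₁, hM₁⟩ := P₁.bdd
  obtain ⟨M₂, hM₂⟩ := P₂.bdd
  rw [Poly.norm, Poly.norm, Poly.norm]
  set S₁ : ℝ := ⨆ Jv : Fin (m₁ + 1) → Idx d, ‖P₁.coeff Jv‖ with hS₁def
  set S₂ : ℝ := ⨆ Jv : Fin (m₂ + 1) → Idx d, ‖P₂.coeff Jv‖ with hS₂def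
  have hbd₁ : BddAbove (Set.range fun Jv => ‖P₁.coeff Jv‖) := by
    refine ⟨M₁, ?_⟩; rintro x ⟨Jv, rfl⟩; exact hM₁ Jv
  have hbd₂ : BddAbove (Set.range fun Jv => ‖P₂.coeff Jv‖) := by
    refine ⟨M₂, ?_⟩; rintro x ⟨Jv, rfl⟩; exact hM₂ Jv
  have hS₁ : ∀ Jv, ‖P₁.coeff Jv‖ ≤ S₁ := fun Jv => le_ciSup hbd₁ Jv
  have hS₂ : ∀ Jv, ‖P₂.coeff Jv‖ ≤ S₂ := fun Jv => le_ciSup hbd₂ Jv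
  have hS₁0 : 0 ≤ S₁ :=
    le_trans (norm_nonneg _) (hS₁ (fun _ => ((0 : Zd d), true)))
  have hS₂0 : 0 ≤ S₂ :=
    le_trans (norm_nonneg _) (hS₂ (fun _ => ((0 : Zd d), true)))
  have hQ : ∀ Jv, ‖Qc P₁ P₂ Jv‖ ≤ 2 * ((m₁ + 1) * (m₂ + 1) : ℕ) * S₁ * S₂ :=
    fun Jv => Qc_bound P₁ P₂ S₁ S₂ hS₁ hS₂ hS₁0 hS₂0 Jv
  have hQsup : (⨆ Jv : Fin (m₁ + m₂) → Idx d, ‖(Qpoly P₁ P₂).coeff Jv‖)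
      ≤ 2 * ((m₁ + 1) * (m₂ + 1) : ℕ) * S₁ * S₂ := ciSup_le hQ
  have hpow : R ^ (m₁ + 1) * R ^ (m₂ + 1) = R ^ (m₁ + m₂) * R ^ 2 := by
    rw [← pow_add, ← pow_add]; congr 1; omega
  have hRn : (0 : ℝ) < R ^ (m₁ + m₂) := pow_pos hR _
  have step1 : (⨆ Jv : Fin (m₁ + m₂) → Idx d, ‖(Qpoly P₁ P₂).coeff Jv‖)
        * R ^ (m₁ + m₂)
      ≤ (2 * ((m₁ + 1) * (m₂ + 1) : ℕ) * S₁ * S₂) * R ^ (m₁ + m₂) :=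
    mul_le_mul_of_nonneg_right hQsup hRn.le
  refine le_trans step1 (le_of_eq ?_)
  have hR2 : (R : ℝ) ^ 2 ≠ 0 := by positivity
  field_simp
  push_cast
  linear_combination (2 * ((m₁ : ℝ) + 1) * ((m₂ : ℝ) + 1) * S₁ * S₂) * hpow

lemma cast_eval {n n' : ℕ} (h : n = n') (P : Poly d n) (u : Seq d) :
    (h ▸ P).eval u = P.eval u := by subst h; rfl

lemma cast_norm {n n' : ℕ} (h : n = n') (P : Poly d n) (R : ℝ) :
    (h ▸ P).norm R = P.norm R := by subst h; rfl

end Main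

/-- Lemma "Poisson brackets".
Given `P₁ ∈ 𝒫_{r₁}`, `P₂ ∈ 𝒫_{r₂}`, the Poisson bracket `{P₁;P₂}` is a well defined
element of `𝒫_{r₁+r₂−2}` (i.e. there is `Q ∈ 𝒫_{r₁+r₂−2}` representing it), and for every
`R > 0`, `‖{P₁;P₂}‖_R ≤ (2 r₁ r₂ / R²) ‖P₁‖_R ‖P₂‖_R`. -/
theorem stmt_3 (d : ℕ) (hd : 1 ≤ d) (r₁ r₂ : ℕ) (h₁ : 1 ≤ r₁) (h₂ : 1 ≤ r₂)
    (P₁ : Poly d r₁) (P₂ : Poly d r₂) :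
    ∃ Q : Poly d (r₁ + r₂ - 2),
      (∀ u : Seq d, (Function.support u).Finite → Q.eval u = bracketEval P₁ P₂ u) ∧
      ∀ R : ℝ, 0 < R →
        Q.norm R ≤ 2 * r₁ * r₂ / R ^ 2 * P₁.norm R * P₂.norm R := by
  obtain ⟨m₁, rfl⟩ : ∃ m, r₁ = m + 1 := ⟨r₁ - 1, by omega⟩
  obtain ⟨m₂, rfl⟩ : ∃ m, r₂ = m + 1 := ⟨r₂ - 1, by omega⟩
  have hN : m₁ + m₂ = m₁ + 1 + (m₂ + 1) - 2 := by omega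
  refine ⟨hN ▸ Qpoly P₁ P₂, fun u hu => ?_, fun R hR => ?_⟩
  · rw [cast_eval hN]
    exact Qpoly_eval P₁ P₂ u hu
  · rw [cast_norm hN]
    exact Qpoly_norm P₁ P₂ R hR

end AG
end
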